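/- arXiv:1302.5555 — 11 statements merged into one kernel-verified Lean document; each statement's English description precedes it below -/
import Mathlib

section
/- For every a∈ℝ the function a·b is c-concave and its c-transform equals −a·b−a²/2. Explicitly: for every a∈ℝ and every y∈X, inf_{x∈X}( d(x,y)²/2 − a·b(x) ) = −a·b(y) − a²/2, and consequently for every x∈X, inf_{y∈X}( d(x,y)²/2 + a·b(y) + a²/2 ) = a·b(x). -/
open Filter Topology

-- general: f limit of t - dist x (γ t) along a line γ; existence of points increasing f at unit speed
theorem ray_exists
    {X : Type*} [MetricSpace X] [ProperSpace X]
    (hgeo : ∀ x y : X, ∃ γ : ℝ → X, γ 0 = x ∧ γ 1 = y ∧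
      ∀ s ∈ Set.Icc (0:ℝ) 1, ∀ t ∈ Set.Icc (0:ℝ) 1,
        dist (γ s) (γ t) = |s - t| * dist x y)
    (γ : ℝ → X) (hline : ∀ s t : ℝ, dist (γ s) (γ t) = |s - t|)
    (f : X → ℝ) (hf : ∀ x : X, Tendsto (fun t => t - dist x (γ t)) atTop (𝓝 (f x)))
    (s : ℝ) (hs : 0 ≤ s) (y : X) :
    ∃ z : X, dist z y = s ∧ f z = f y + s := by
  -- Lipschitz bound
  have lip : ∀ u v : X, f u ≤ f v + dist u v := by
    intro u v
    refine le_of_tendsto_of_tendsto' (hf u) ((hf v).add_const (dist u v)) (fun t => ?_)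
    have := dist_triangle v u (γ t)
    linarith [dist_comm u v ▸ this]
  -- lower bound: t - dist x (γ t) ≤ f x
  have lower : ∀ (x : X) (t : ℝ), t - dist x (γ t) ≤ f x := by
    intro x t
    refine ge_of_tendsto (hf x) (eventually_atTop.2 ⟨t, fun u hu => ?_⟩)
    have h1 := dist_triangle x (γ t) (γ u)
    have h2 : dist (γ t) (γ u) = u - t := by rw [hline]; rw [abs_of_nonpos (by linarith)]; ring
    linarith
  rcases eq_or_lt_of_le hs with h0 | hs'
  · exact ⟨y, by simp [← h0], by simp [← h0]⟩
  -- s > 0 case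
  set c : ℝ := dist y (γ 0) with hc
  set T : ℕ → ℝ := fun n => (n : ℝ) + s + c + 1 with hT
  have hTpos : ∀ n, (0:ℝ) ≤ T n := fun n => by
    have : (0:ℝ) ≤ (n:ℝ) := Nat.cast_nonneg n
    have : (0:ℝ) ≤ c := dist_nonneg
    simp only [hT]; positivity
  have hD : ∀ n : ℕ, s + 1 ≤ dist y (γ (T n)) := by
    intro n
    have h1 : dist (γ 0) (γ (T n)) = T n := by
      rw [hline, abs_of_nonpos (by linarith [hTpos n])]; ring
    have h2 := dist_triangle (γ 0) y (γ (T n))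
    have : (0:ℝ) ≤ (n:ℝ) := Nat.cast_nonneg n
    rw [dist_comm (γ 0) y] at h2
    simp only [hT] at h1
    linarith
  have hDpos : ∀ n : ℕ, 0 < dist y (γ (T n)) := fun n => by linarith [hD n]
  choose g hg0 hg1 hgd using fun n : ℕ => hgeo y (γ (T n))
  set x : ℕ → X := fun n => g n (s / dist y (γ (T n))) with hx
  have hmem : ∀ n : ℕ, s / dist y (γ (T n)) ∈ Set.Icc (0:ℝ) 1 := by
    intro n
    constructor
    · positivity
    · rw [div_le_one (hDpos n)]; linarith [hD n]
  have hdxy : ∀ n : ℕ, dist (x n) y = s := by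
    intro n
    have := hgd n _ (hmem n) 0 (by simp)
    rw [hg0 n] at this
    rw [hx]; simp only []
    rw [this, sub_zero, abs_of_nonneg (by positivity), div_mul_cancel₀]
    exact (hDpos n).ne'
  have hdxg : ∀ n : ℕ, dist (x n) (γ (T n)) = dist y (γ (T n)) - s := by
    intro n
    have := hgd n _ (hmem n) 1 (by simp)
    rw [hg1 n] at this
    rw [hx]; simp only []
    rw [this, abs_of_nonpos (by linarith [(hmem n).2]), neg_sub, sub_mul, one_mul,
      div_mul_cancel₀ _ (hDpos n).ne']
  have hfx : ∀ n : ℕ, s + (T n - dist y (γ (T n))) ≤ f (x n) := by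
    intro n
    have := lower (x n) (T n)
    rw [hdxg n] at this
    linarith
  -- compactness
  have hball : ∀ n, x n ∈ Metric.closedBall y s := fun n => by
    rw [Metric.mem_closedBall, hdxy n]
  obtain ⟨z, _, φ, hφ, hconv⟩ := (isCompact_closedBall y s).tendsto_subseq hball
  have fcont : Continuous f := by
    have : LipschitzWith 1 f := by
      refine LipschitzWith.of_dist_le_mul (fun u v => ?_)
      rw [Real.dist_eq, NNReal.coe_one, one_mul]
      refine abs_le.2 ⟨?_, ?_⟩
      · have := lip v u; rw [dist_comm v u] at this; linarith
      · linarith [lip u v]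
    exact this.continuous
  have hTtop : Tendsto T atTop atTop := by
    exact tendsto_atTop_add_const_right _ 1 (tendsto_atTop_add_const_right _ c
      (tendsto_atTop_add_const_right _ s tendsto_natCast_atTop_atTop))
  have hTφ : Tendsto (T ∘ φ) atTop atTop := hTtop.comp hφ.tendsto_atTop
  have hlim1 : Tendsto (fun n => s + (T (φ n) - dist y (γ (T (φ n))))) atTop (𝓝 (s + f y)) :=
    tendsto_const_nhds.add ((hf y).comp hTφ)
  have hlim2 : Tendsto (fun n => f (x (φ n))) atTop (𝓝 (f z)) :=
    (fcont.continuousAt.tendsto).comp hconv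
  have hge : s + f y ≤ f z :=
    le_of_tendsto_of_tendsto' hlim1 hlim2 (fun n => hfx (φ n))
  have hdzy : dist z y = s := by
    have h1 : Tendsto (fun n => dist (x (φ n)) y) atTop (𝓝 (dist z y)) :=
      hconv.dist tendsto_const_nhds
    have h2 : Tendsto (fun n => dist (x (φ n)) y) atTop (𝓝 s) := by
      simp only [hdxy]; exact tendsto_const_nhds
    exact tendsto_nhds_unique h1 h2
  have hle : f z ≤ f y + s := by have := lip z y; rw [hdzy] at this; linarith
  exact ⟨z, hdzy, by linarith⟩

/-- On a proper geodesic space containing a line whose Busemann functions satisfy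
`b⁺ + b⁻ = 0` (with `b := b⁺`), every multiple `a·b` is c-concave with
c-transform `(a·b)^c = -a·b - a²/2`. -/
theorem busemann_multiples_are_kantorovich_potentials
    {X : Type*} [MetricSpace X] [ProperSpace X]
    (hgeo : ∀ x y : X, ∃ γ : ℝ → X, γ 0 = x ∧ γ 1 = y ∧
      ∀ s ∈ Set.Icc (0:ℝ) 1, ∀ t ∈ Set.Icc (0:ℝ) 1,
        dist (γ s) (γ t) = |s - t| * dist x y)
    (γbar : ℝ → X)
    (hline : ∀ s t : ℝ, dist (γbar s) (γbar t) = |s - t|)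
    (b bminus : X → ℝ)
    (hb : ∀ x : X, Tendsto (fun t => t - dist x (γbar t)) atTop (𝓝 (b x)))
    (hbminus : ∀ x : X, Tendsto (fun t => t - dist x (γbar (-t))) atTop (𝓝 (bminus x)))
    (hsum : ∀ x : X, b x + bminus x = 0) :
    (∀ (a : ℝ) (y : X),
      (⨅ x : X, (dist x y ^ 2 / 2 - a * b x)) = -(a * b y) - a ^ 2 / 2) ∧
    (∀ (a : ℝ) (x : X),
      (⨅ y : X, (dist x y ^ 2 / 2 + a * b y + a ^ 2 / 2)) = a * b x) := by
  have : Nonempty X := ⟨γbar 0⟩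
  -- Lipschitz bound for b
  have lip : ∀ u v : X, b u ≤ b v + dist u v := by
    intro u v
    refine le_of_tendsto_of_tendsto' (hb u) ((hb v).add_const (dist u v)) (fun t => ?_)
    have := dist_triangle v u (γbar t)
    linarith [dist_comm u v ▸ this]
  -- the reversed line for bminus
  have hline' : ∀ s t : ℝ, dist (γbar (-s)) (γbar (-t)) = |s - t| := by
    intro s t; rw [hline]
    rw [show -s - -t = -(s - t) by ring, abs_neg]
  -- key existence: for every a and y, a point z with dist z y = |a| and b z = b y + a
  have key : ∀ (a : ℝ) (y : X), ∃ z : X, dist z y = |a| ∧ b z = b y + a := by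
    intro a y
    rcases le_or_gt 0 a with ha | ha
    · obtain ⟨z, hz1, hz2⟩ := ray_exists hgeo γbar hline b hb a ha y
      exact ⟨z, by rw [abs_of_nonneg ha]; exact hz1, hz2⟩
    · obtain ⟨z, hz1, hz2⟩ := ray_exists hgeo (fun t => γbar (-t)) hline' bminus hbminus
        (-a) (by linarith) y
      refine ⟨z, by rw [abs_of_neg ha]; exact hz1, ?_⟩
      have h1 := hsum z
      have h2 := hsum y
      linarith
  -- common lower bound inequality
  have bound : ∀ (a : ℝ) (u v : X), a * (b u - b v) ≤ dist u v ^ 2 / 2 + a ^ 2 / 2 := by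
    intro a u v
    have h1 : |b u - b v| ≤ dist u v := by
      refine abs_le.2 ⟨?_, ?_⟩
      · have := lip v u; rw [dist_comm v u] at this; linarith
      · linarith [lip u v]
    have h2 : a * (b u - b v) ≤ |a| * dist u v := by
      calc a * (b u - b v) ≤ |a * (b u - b v)| := le_abs_self _
        _ = |a| * |b u - b v| := abs_mul _ _
        _ ≤ |a| * dist u v := by
            exact mul_le_mul_of_nonneg_left h1 (abs_nonneg a)
    nlinarith [sq_nonneg (dist u v - |a|), sq_abs a, h2]
  constructor
  · intro a y
    obtain ⟨z, hz1, hz2⟩ := key a y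
    have hbdd : BddBelow (Set.range fun x : X => dist x y ^ 2 / 2 - a * b x) := by
      refine ⟨-(a * b y) - a ^ 2 / 2, ?_⟩
      rintro v ⟨x, rfl⟩
      have := bound a x y
      simp only []
      linarith
    refine le_antisymm ?_ ?_
    · calc (⨅ x : X, (dist x y ^ 2 / 2 - a * b x)) ≤ dist z y ^ 2 / 2 - a * b z :=
            ciInf_le hbdd z
        _ = -(a * b y) - a ^ 2 / 2 := by rw [hz1, hz2, sq_abs]; ring
    · refine le_ciInf (fun x => ?_)
      have := bound a x y
      linarith
  · intro a x
    obtain ⟨z, hz1, hz2⟩ := key (-a) x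
    rw [abs_neg] at hz1
    have hbdd : BddBelow (Set.range fun y : X => dist x y ^ 2 / 2 + a * b y + a ^ 2 / 2) := by
      refine ⟨a * b x, ?_⟩
      rintro v ⟨y, rfl⟩
      have := bound a x y
      simp only []
      linarith
    refine le_antisymm ?_ ?_
    · calc (⨅ y : X, (dist x y ^ 2 / 2 + a * b y + a ^ 2 / 2))
            ≤ dist x z ^ 2 / 2 + a * b z + a ^ 2 / 2 := ciInf_le hbdd z
        _ = a * b x := by rw [dist_comm x z, hz1, hz2, sq_abs]; ring
    · refine le_ciInf (fun y => ?_)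
      have := bound a x y
      linarith
end

section
/- For every x∈X, limsup_{y→x, y≠x} |b(y)−b(x)|/d(x,y) = 1; that is, the local Lipschitz constant of the Busemann function b equals 1 at every point of X (note that no point of X is isolated, since X is geodesic and contains a line). -/
open Filter Topology

/-- On a proper geodesic space containing a line with `b⁺ + b⁻ = 0` (and `b := b⁺`),
the local Lipschitz constant of the Busemann function `b` equals `1` at every point. -/
theorem busemann_local_lipschitz_constant_one
    {X : Type*} [MetricSpace X] [ProperSpace X]
    (hgeo : ∀ x y : X, ∃ γ : ℝ → X, γ 0 = x ∧ γ 1 = y ∧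
      ∀ s ∈ Set.Icc (0:ℝ) 1, ∀ t ∈ Set.Icc (0:ℝ) 1,
        dist (γ s) (γ t) = |s - t| * dist x y)
    (γbar : ℝ → X)
    (hline : ∀ s t : ℝ, dist (γbar s) (γbar t) = |s - t|)
    (b bminus : X → ℝ)
    (hb : ∀ x : X, Tendsto (fun t => t - dist x (γbar t)) atTop (𝓝 (b x)))
    (hbminus : ∀ x : X, Tendsto (fun t => t - dist x (γbar (-t))) atTop (𝓝 (bminus x)))
    (hsum : ∀ x : X, b x + bminus x = 0) :
    ∀ x : X, Filter.limsup (fun y => |b y - b x| / dist x y) (𝓝[≠] x) = 1 := by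
  -- `t ↦ t - dist x (γbar t)` is nondecreasing
  have hmono : ∀ (x : X) (s t : ℝ), s ≤ t →
      s - dist x (γbar s) ≤ t - dist x (γbar t) := by
    intro x s t hst
    have h : dist x (γbar t) ≤ dist x (γbar s) + dist (γbar s) (γbar t) :=
      dist_triangle _ _ _
    rw [hline, abs_of_nonpos (by linarith)] at h
    linarith
  -- hence each value is at most the limit
  have hle : ∀ (x : X) (t : ℝ), t - dist x (γbar t) ≤ b x := by
    intro x t
    refine ge_of_tendsto (hb x) ?_
    filter_upwards [eventually_ge_atTop t] with u hu
    exact hmono x t u hu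
  -- b is 1-Lipschitz
  have hlip : ∀ x y : X, |b y - b x| ≤ dist x y := by
    intro x y
    have h1 : Tendsto (fun t => (t - dist y (γbar t)) - (t - dist x (γbar t)))
        atTop (𝓝 (b y - b x)) := (hb y).sub (hb x)
    refine le_of_tendsto h1.abs ?_
    filter_upwards with t
    have h2 : |(t - dist y (γbar t)) - (t - dist x (γbar t))|
        = |dist x (γbar t) - dist y (γbar t)| := by
      congr 1; ring
    rw [h2]
    exact abs_dist_sub_le _ _ _
  -- key construction: points at prescribed small distance where b almost gains ε
  have key : ∀ (x : X) (ε : ℝ), 0 < ε → ∀ (δ : ℝ), 0 < δ →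
      ∃ y : X, dist x y = ε ∧ ε - δ ≤ b y - b x := by
    intro x ε hε δ hδ
    -- choose T large
    obtain ⟨T, hT1, hT2⟩ : ∃ T : ℝ, b x - δ < T - dist x (γbar T) ∧
        ε + dist (γbar 0) x ≤ T := by
      have h1 : ∀ᶠ T in atTop, b x - δ < T - dist x (γbar T) :=
        (hb x).eventually (eventually_gt_nhds (by linarith))
      exact (h1.and (eventually_ge_atTop _)).exists
    set z := γbar T with hz
    have hDge : ε ≤ dist x z := by
      have h3 : dist (γbar 0) (γbar T) ≤ dist (γbar 0) x + dist x (γbar T) :=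
        dist_triangle _ _ _
      have hT0 : (0:ℝ) ≤ T := le_trans (by positivity) hT2
      rw [hline, abs_of_nonpos (by linarith)] at h3
      have : T - dist (γbar 0) x ≤ dist x z := by simpa [hz] using by linarith
      linarith
    have hD : 0 < dist x z := lt_of_lt_of_le hε hDge
    obtain ⟨γ, hγ0, hγ1, hγd⟩ := hgeo x z
    set s : ℝ := ε / dist x z with hs
    have hs0 : 0 ≤ s := by positivity
    have hs1 : s ≤ 1 := by rw [hs, div_le_one hD]; exact hDge
    have hsD : s * dist x z = ε := div_mul_cancel₀ ε hD.ne'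
    refine ⟨γ s, ?_, ?_⟩
    · have := hγd 0 ⟨le_refl _, zero_le_one⟩ s ⟨hs0, hs1⟩
      rw [hγ0] at this
      rw [this, abs_of_nonpos (by linarith)]
      linear_combination hsD
    · have hdyz : dist (γ s) z = dist x z - ε := by
        have := hγd s ⟨hs0, hs1⟩ 1 ⟨zero_le_one, le_refl _⟩
        rw [hγ1] at this
        rw [this, abs_of_nonpos (by linarith)]
        linear_combination -hsD
      have h4 : T - dist (γ s) (γbar T) ≤ b (γ s) := hle (γ s) T
      rw [← hz, hdyz] at h4
      linarith
  intro x
  -- the punctured neighborhood filter is nontrivial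
  have hne : (𝓝[≠] x).NeBot := by
    rw [← mem_closure_iff_nhdsWithin_neBot]
    rw [Metric.mem_closure_iff]
    intro r hr
    obtain ⟨y, hy1, -⟩ := key x (r/2) (by linarith) 1 one_pos
    refine ⟨y, ?_, ?_⟩
    · simp only [Set.mem_compl_iff, Set.mem_singleton_iff]
      intro h; rw [h, dist_self] at hy1; linarith
    · rw [hy1]; linarith
  -- the ratio is at most 1 everywhere
  have hub : ∀ᶠ y in 𝓝[≠] x, |b y - b x| / dist x y ≤ 1 := by
    filter_upwards [self_mem_nhdsWithin] with y hy
    have hd : 0 < dist x y := dist_pos.2 (Ne.symm hy)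
    rw [div_le_one hd]
    exact hlip x y
  have hbdd : IsBoundedUnder (· ≤ ·) (𝓝[≠] x) (fun y => |b y - b x| / dist x y) :=
    isBoundedUnder_of_eventually_le hub
  refine le_antisymm (limsup_le_of_le ?_ hub) ?_
  · exact isCoboundedUnder_le_of_eventually_le (𝓝[≠] x)
      (by filter_upwards with y; positivity)
  · refine le_of_forall_lt_imp_le_of_dense ?_
    intro c hc
    refine le_limsup_of_frequently_le ?_ hbdd
    rw [(Metric.nhdsWithin_basis_ball).frequently_iff]
    intro r hr
    set ε := r / 2 with hε
    have hεpos : 0 < ε := by positivity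
    set δ := ε * (1 - c) with hδ
    have hδpos : 0 < δ := by apply mul_pos hεpos; linarith
    obtain ⟨y, hy1, hy2⟩ := key x ε hεpos δ hδpos
    refine ⟨y, ⟨?_, ?_⟩, ?_⟩
    · rw [Metric.mem_ball, dist_comm, hy1]; linarith
    · simp only [Set.mem_compl_iff, Set.mem_singleton_iff]
      intro h; rw [h] at hy1; simp at hy1; linarith
    · rw [hy1, le_div_iff₀ hεpos]
      have : ε - δ ≤ |b y - b x| := le_trans hy2 (le_abs_self _)
      have hcε : c * ε = ε - δ := by rw [hδ]; ring
      linarith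
  done
end

section
/- For every x∈X and every a∈ℝ there exists y∈X with d(x,y)=|a| and b(x)−b(y)=a. (In the paper's terminology: the c-superdifferential ∂^c(a·b)(x) is nonempty for every x∈X and a∈ℝ.) -/
open Filter Topology

private theorem busemann_helper {X : Type*} [MetricSpace X] [ProperSpace X]
    (hgeo : ∀ x y : X, ∃ γ : ℝ → X, γ 0 = x ∧ γ 1 = y ∧
      ∀ s ∈ Set.Icc (0:ℝ) 1, ∀ t ∈ Set.Icc (0:ℝ) 1,
        dist (γ s) (γ t) = |s - t| * dist x y)
    (γ : ℝ → X) (hline : ∀ s t : ℝ, dist (γ s) (γ t) = |s - t|)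
    (f : X → ℝ) (hf : ∀ x : X, Tendsto (fun t => t - dist x (γ t)) atTop (𝓝 (f x)))
    (x : X) (a : ℝ) (ha : 0 ≤ a) : ∃ y : X, dist x y = a ∧ f y = f x + a := by
  -- one-sided Lipschitz bound
  have hlip : ∀ z w : X, f z ≤ f w + dist z w := by
    intro z w
    refine le_of_tendsto_of_tendsto' (hf z) ((hf w).add_const (dist z w)) ?_
    intro t
    have h1 : dist w (γ t) ≤ dist w z + dist z (γ t) := dist_triangle _ _ _
    have h2 : dist w z = dist z w := dist_comm _ _
    linarith
  have hlipw : LipschitzWith 1 f := by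
    refine LipschitzWith.of_dist_le_mul fun z w => ?_
    rw [NNReal.coe_one, one_mul, Real.dist_eq, abs_sub_le_iff]
    constructor
    · linarith [hlip z w]
    · linarith [hlip w z, dist_comm z w]
  -- lower bound via monotonicity
  have hlow : ∀ z : X, ∀ s : ℝ, s - dist z (γ s) ≤ f z := by
    intro z s
    refine ge_of_tendsto (hf z) ?_
    filter_upwards [eventually_ge_atTop s] with t ht
    have h1 : dist z (γ t) ≤ dist z (γ s) + dist (γ s) (γ t) := dist_triangle _ _ _
    have h2 : dist (γ s) (γ t) = |s - t| := hline s t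
    have h3 : |s - t| = t - s := by rw [abs_sub_comm]; exact abs_of_nonneg (by linarith)
    linarith
  rcases eq_or_lt_of_le ha with rfl | hpos
  · exact ⟨x, by simp, by simp⟩
  set c := dist x (γ 0) with hc
  have hD : ∀ t : ℝ, t - c ≤ dist x (γ t) := by
    intro t
    have h1 : dist (γ 0) (γ t) ≤ dist (γ 0) x + dist x (γ t) := dist_triangle _ _ _
    have h2 : dist (γ 0) (γ t) = |0 - t| := hline 0 t
    have h3 : dist (γ 0) x = c := dist_comm _ _
    have h4 : t ≤ |0 - t| := by rw [abs_sub_comm, sub_zero]; exact le_abs_self t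
    linarith
  set T : ℕ → ℝ := fun n => (n : ℝ) + (a + c) with hT
  have hc0 : 0 ≤ c := dist_nonneg
  have hDa : ∀ n : ℕ, a ≤ dist x (γ (T n)) := by
    intro n
    have := hD (T n)
    have hn : (0:ℝ) ≤ n := Nat.cast_nonneg n
    simp only [hT] at this ⊢
    linarith
  have hDpos : ∀ n : ℕ, 0 < dist x (γ (T n)) := fun n => lt_of_lt_of_le hpos (hDa n)
  choose g hg0 hg1 hgd using fun n : ℕ => hgeo x (γ (T n))
  set D : ℕ → ℝ := fun n => dist x (γ (T n)) with hDdef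
  set y : ℕ → X := fun n => g n (a / D n) with hy
  have hmemIcc : ∀ n, a / D n ∈ Set.Icc (0:ℝ) 1 := by
    intro n
    constructor
    · positivity
    · rw [div_le_one (hDpos n)]; exact hDa n
  have hdxy : ∀ n, dist x (y n) = a := by
    intro n
    have := hgd n 0 ⟨le_refl 0, zero_le_one⟩ (a / D n) (hmemIcc n)
    rw [hg0 n] at this
    rw [hy]
    simp only [this]
    rw [abs_sub_comm, sub_zero, abs_of_nonneg (hmemIcc n).1]
    exact div_mul_cancel₀ a (ne_of_gt (hDpos n))
  have hdyγ : ∀ n, dist (y n) (γ (T n)) = D n - a := by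
    intro n
    have := hgd n (a / D n) (hmemIcc n) 1 ⟨zero_le_one, le_refl 1⟩
    rw [hg1 n] at this
    rw [hy]
    simp only [this]
    rw [abs_sub_comm, abs_of_nonneg (by linarith [(hmemIcc n).2] : (0:ℝ) ≤ 1 - a / D n)]
    rw [sub_mul, one_mul, div_mul_cancel₀ a (ne_of_gt (hDpos n))]
  have hmem : ∀ n, y n ∈ Metric.closedBall x a := by
    intro n
    rw [Metric.mem_closedBall, dist_comm, hdxy n]
  obtain ⟨z, hz, φ, hφ, hconv⟩ := (isCompact_closedBall x a).tendsto_subseq hmem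
  have hTtop : Tendsto T atTop atTop := by
    apply tendsto_atTop_add_const_right
    exact tendsto_natCast_atTop_atTop
  have hTD : Tendsto (fun n => T n - D n) atTop (𝓝 (f x)) := (hf x).comp hTtop
  have hfylow : ∀ n, T n - D n + a ≤ f (y n) := by
    intro n
    have := hlow (y n) (T n)
    rw [hdyγ n] at this
    linarith
  have hfyup : ∀ n, f (y n) ≤ f x + a := by
    intro n
    have := hlip (y n) x
    rw [dist_comm, hdxy n] at this
    linarith
  have hfytend : Tendsto (fun n => f (y n)) atTop (𝓝 (f x + a)) :=
    tendsto_of_tendsto_of_tendsto_of_le_of_le (hTD.add_const a) tendsto_const_nhds hfylow hfyup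
  have h1 : Tendsto (fun k => f (y (φ k))) atTop (𝓝 (f z)) :=
    (hlipw.continuous.continuousAt.tendsto).comp hconv
  have h2 : Tendsto (fun k => f (y (φ k))) atTop (𝓝 (f x + a)) :=
    hfytend.comp hφ.tendsto_atTop
  have hdist : Tendsto (fun k => dist x (y (φ k))) atTop (𝓝 (dist x z)) :=
    tendsto_const_nhds.dist hconv
  have hdist' : dist x z = a := by
    have he : (fun k => dist x (y (φ k))) = fun _ => a := funext fun k => hdxy (φ k)
    rw [he] at hdist
    exact tendsto_nhds_unique hdist tendsto_const_nhds
  exact ⟨z, hdist', tendsto_nhds_unique h1 h2⟩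

/-- On a proper geodesic space containing a line with `b⁺ + b⁻ = 0` (and `b := b⁺`),
for every `x` and every `a ∈ ℝ` there is a point `y` with `dist x y = |a|` and
`b x - b y = a`, i.e. the c-superdifferential `∂^c(a·b)(x)` is nonempty. -/
theorem busemann_c_superdifferential_nonempty
    {X : Type*} [MetricSpace X] [ProperSpace X]
    (hgeo : ∀ x y : X, ∃ γ : ℝ → X, γ 0 = x ∧ γ 1 = y ∧
      ∀ s ∈ Set.Icc (0:ℝ) 1, ∀ t ∈ Set.Icc (0:ℝ) 1,
        dist (γ s) (γ t) = |s - t| * dist x y)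
    (γbar : ℝ → X)
    (hline : ∀ s t : ℝ, dist (γbar s) (γbar t) = |s - t|)
    (b bminus : X → ℝ)
    (hb : ∀ x : X, Tendsto (fun t => t - dist x (γbar t)) atTop (𝓝 (b x)))
    (hbminus : ∀ x : X, Tendsto (fun t => t - dist x (γbar (-t))) atTop (𝓝 (bminus x)))
    (hsum : ∀ x : X, b x + bminus x = 0) :
    ∀ (x : X) (a : ℝ), ∃ y : X, dist x y = |a| ∧ b x - b y = a := by
  intro x a
  rcases le_or_gt a 0 with h | h
  · obtain ⟨y, hd, hfy⟩ := busemann_helper hgeo γbar hline b hb x (-a) (by linarith)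
    exact ⟨y, by rw [hd, abs_of_nonpos h], by linarith⟩
  · obtain ⟨y, hd, hfy⟩ := busemann_helper hgeo (fun s => γbar (-s))
      (by intro s t; rw [hline, abs_sub_comm]; congr 1; ring) bminus hbminus x a h.le
    refine ⟨y, by rw [hd, abs_of_pos h], ?_⟩
    have h1 := hsum x; have h2 := hsum y; linarith
end

section
/- Assume in addition that (X,d) is geodesic, i.e. any two points x,y∈X are joined by a curve γ:[0,1]→X with γ(0)=x, γ(1)=y and d(γ(s),γ(t))=|s−t|·d(x,y) for all s,t. Then the quotient metric space is geodesic; on representatives: for all x,y∈X there exists a curve γ:[0,1]→X with γ(0)=x, D(γ(1),y)=0 and D(γ(s),γ(t))=|s−t|·D(x,y) for all s,t∈[0,1]. -/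
open Filter Topology

/-- If moreover `X` is geodesic, the quotient metric space is geodesic: for all
`x, y ∈ X` there is a curve `γ` with `γ 0 = x`, `γ 1` equivalent to `y`, which is a
constant-speed geodesic for the quotient distance `D x y = ⨅ t, dist x (F t y)`. -/
theorem quotient_space_geodesic
    {X : Type*} [MetricSpace X] (F : ℝ → X → X)
    (hF0 : ∀ x : X, F 0 x = x)
    (hgrp : ∀ t s : ℝ, ∀ x : X, F t (F s x) = F (t + s) x)
    (hiso : ∀ t : ℝ, ∀ x y : X, dist (F t x) (F t y) = dist x y)
    (horbit : ∀ x : X, ∀ t : ℝ, dist x (F t x) = |t|)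
    (hgeo : ∀ x y : X, ∃ γ : ℝ → X, γ 0 = x ∧ γ 1 = y ∧
      ∀ s ∈ Set.Icc (0:ℝ) 1, ∀ t ∈ Set.Icc (0:ℝ) 1,
        dist (γ s) (γ t) = |s - t| * dist x y) :
    ∀ x y : X, ∃ γ : ℝ → X, γ 0 = x ∧
      (⨅ t : ℝ, dist (γ 1) (F t y)) = 0 ∧
      ∀ s ∈ Set.Icc (0:ℝ) 1, ∀ u ∈ Set.Icc (0:ℝ) 1,
        (⨅ t : ℝ, dist (γ s) (F t (γ u))) = |s - u| * ⨅ t : ℝ, dist x (F t y) := by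
  intro x y
  -- basic facts about the quotient distance
  have hbdd : ∀ a b : X, BddBelow (Set.range fun t : ℝ => dist a (F t b)) := by
    intro a b
    exact ⟨0, by rintro _ ⟨t, rfl⟩; exact dist_nonneg⟩
  have hDle : ∀ a b : X, ∀ t : ℝ, (⨅ r : ℝ, dist a (F r b)) ≤ dist a (F t b) :=
    fun a b t => ciInf_le (hbdd a b) t
  have hDled : ∀ a b : X, (⨅ r : ℝ, dist a (F r b)) ≤ dist a b := by
    intro a b
    have := hDle a b 0
    rwa [hF0] at this
  have hDnonneg : ∀ a b : X, 0 ≤ ⨅ r : ℝ, dist a (F r b) :=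
    fun a b => Real.iInf_nonneg fun t => dist_nonneg
  have hFdist : ∀ (t s : ℝ) (a : X), dist (F t a) (F s a) = |t - s| := by
    intro t s a
    have h := hiso (-s) (F t a) (F s a)
    rw [hgrp, hgrp, neg_add_cancel, hF0] at h
    rw [← h, dist_comm, horbit]
    ring_nf
  have hDsymm : ∀ a b : X,
      (⨅ r : ℝ, dist a (F r b)) = ⨅ r : ℝ, dist b (F r a) := by
    have key : ∀ a b : X, (⨅ r : ℝ, dist a (F r b)) ≤ ⨅ r : ℝ, dist b (F r a) := by
      intro a b
      refine le_ciInf fun t => ?_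
      have h : dist b (F t a) = dist a (F (-t) b) := by
        have h2 := hiso (-t) b (F t a)
        rw [hgrp, neg_add_cancel, hF0] at h2
        rw [← h2, dist_comm]
      rw [h]
      exact hDle a b (-t)
    intro a b
    exact le_antisymm (key a b) (key b a)
  have hDtri : ∀ a b c : X,
      (⨅ r : ℝ, dist a (F r c)) ≤ (⨅ r : ℝ, dist a (F r b)) + ⨅ r : ℝ, dist b (F r c) := by
    intro a b c
    have key : ∀ t s : ℝ,
        (⨅ r : ℝ, dist a (F r c)) ≤ dist a (F t b) + dist b (F s c) := by
      intro t s
      calc (⨅ r : ℝ, dist a (F r c)) ≤ dist a (F (t + s) c) := hDle a c (t + s)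
        _ ≤ dist a (F t b) + dist (F t b) (F (t + s) c) := dist_triangle _ _ _
        _ = dist a (F t b) + dist b (F s c) := by rw [← hgrp t s c, hiso]
    have h1 : ∀ t : ℝ,
        (⨅ r : ℝ, dist a (F r c)) - (⨅ r : ℝ, dist b (F r c)) ≤ dist a (F t b) := by
      intro t
      have : (⨅ r : ℝ, dist a (F r c)) - dist a (F t b) ≤ ⨅ r : ℝ, dist b (F r c) :=
        le_ciInf fun s => by linarith [key t s]
      linarith
    have h2 := le_ciInf h1
    linarith
  -- existence of a minimizer t₀
  have hcont : Continuous fun t : ℝ => dist x (F t y) := by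
    have hlip : LipschitzWith 1 fun t : ℝ => F t y := by
      refine LipschitzWith.of_dist_le_mul fun t s => ?_
      rw [hFdist]
      simp [Real.dist_eq]
    exact continuous_const.dist hlip.continuous
  set R : ℝ := 2 * dist x y + 1 with hR
  have hR0 : (0 : ℝ) ∈ Set.Icc (-R) R := by
    constructor <;> [nlinarith [dist_nonneg (x := x) (y := y)];
      nlinarith [dist_nonneg (x := x) (y := y)]]
  obtain ⟨t₀, ht₀mem, ht₀min⟩ :=
    isCompact_Icc.exists_isMinOn ⟨0, hR0⟩ hcont.continuousOn
  have hlow : ∀ t : ℝ, |t| - dist x y ≤ dist x (F t y) := by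
    intro t
    have h := dist_triangle y x (F t y)
    rw [← horbit y t] at *
    have := dist_comm y x
    linarith [dist_triangle y x (F t y), dist_comm y x ▸ h]
  have hglobal : ∀ t : ℝ, dist x (F t₀ y) ≤ dist x (F t y) := by
    intro t
    by_cases ht : t ∈ Set.Icc (-R) R
    · exact ht₀min ht
    · have habs : R < |t| := by
        rw [Set.mem_Icc] at ht
        push_neg at ht
        rcases le_or_gt t 0 with h | h
        · rw [abs_of_nonpos h]
          rcases lt_or_ge t (-R) with h2 | h2
          · linarith
          · exfalso; exact absurd (ht h2) (not_lt.mpr (by linarith [hR0.2]))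
        · rw [abs_of_pos h]
          rcases lt_or_ge R t with h2 | h2
          · exact h2
          · exact absurd (ht (by linarith [hR0.2])) (not_lt.mpr h2)
      have h1 : dist x (F t₀ y) ≤ dist x (F 0 y) := ht₀min hR0
      rw [hF0] at h1
      have h2 := hlow t
      have : dist x y + 1 < dist x (F t y) := by
        have : |t| - dist x y > R - dist x y := by linarith
        rw [hR] at this
        linarith
      linarith
  have hDxy : (⨅ r : ℝ, dist x (F r y)) = dist x (F t₀ y) :=
    le_antisymm (hDle x y t₀) (le_ciInf hglobal)
  set y' : X := F t₀ y with hy'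
  -- D x y' = D x y
  have hshift : ∀ t : ℝ, F t y' = F (t + t₀) y := fun t => hgrp t t₀ y
  have hDxy' : (⨅ r : ℝ, dist x (F r y')) = ⨅ r : ℝ, dist x (F r y) := by
    refine le_antisymm (le_ciInf fun t => ?_) (le_ciInf fun t => ?_)
    · have : dist x (F t y) = dist x (F (t - t₀) y') := by
        rw [hshift, sub_add_cancel]
      rw [this]
      exact hDle x y' (t - t₀)
    · rw [hshift]
      exact hDle x y (t + t₀)
  have hDxy'd : (⨅ r : ℝ, dist x (F r y')) = dist x y' := by
    rw [hDxy', hDxy]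
  -- take a geodesic from x to y'
  obtain ⟨γ, hγ0, hγ1, hγd⟩ := hgeo x y'
  refine ⟨γ, hγ0, ?_, ?_⟩
  · refine le_antisymm ?_ (hDnonneg _ _)
    have h := hDle (γ 1) y t₀
    rw [hγ1] at *
    simpa [hy'] using hDle y' y t₀
  · -- the main geodesic property
    set d0 : ℝ := dist x y' with hd0
    have hmem0 : (0:ℝ) ∈ Set.Icc (0:ℝ) 1 := by constructor <;> norm_num
    have hmem1 : (1:ℝ) ∈ Set.Icc (0:ℝ) 1 := by constructor <;> norm_num
    have main : ∀ a ∈ Set.Icc (0:ℝ) 1, ∀ b ∈ Set.Icc (0:ℝ) 1, a ≤ b →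
        (⨅ r : ℝ, dist (γ a) (F r (γ b))) = (b - a) * d0 := by
      intro a ha b hb hab
      have hdab : dist (γ a) (γ b) = (b - a) * d0 := by
        rw [hγd a ha b hb, abs_of_nonpos (by linarith), neg_sub]
      have hupper : (⨅ r : ℝ, dist (γ a) (F r (γ b))) ≤ (b - a) * d0 := by
        rw [← hdab]; exact hDled _ _
      have hxa : (⨅ r : ℝ, dist x (F r (γ a))) ≤ a * d0 := by
        have : dist x (γ a) = a * d0 := by
          rw [← hγ0, hγd 0 hmem0 a ha, abs_of_nonpos (by linarith [ha.1])]
          ring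
        calc (⨅ r : ℝ, dist x (F r (γ a))) ≤ dist x (γ a) := hDled _ _
          _ = a * d0 := this
      have hby : (⨅ r : ℝ, dist (γ b) (F r y')) ≤ (1 - b) * d0 := by
        have : dist (γ b) y' = (1 - b) * d0 := by
          rw [← hγ1, hγd b hb 1 hmem1, abs_of_nonpos (by linarith [hb.2])]
          ring
        calc (⨅ r : ℝ, dist (γ b) (F r y')) ≤ dist (γ b) y' := hDled _ _
          _ = (1 - b) * d0 := this
      have htri : d0 ≤ (⨅ r : ℝ, dist x (F r (γ a))) +
          ((⨅ r : ℝ, dist (γ a) (F r (γ b))) + ⨅ r : ℝ, dist (γ b) (F r y')) := by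
        calc d0 = ⨅ r : ℝ, dist x (F r y') := hDxy'd.symm
          _ ≤ (⨅ r : ℝ, dist x (F r (γ a))) + ⨅ r : ℝ, dist (γ a) (F r y') :=
            hDtri x (γ a) y'
          _ ≤ (⨅ r : ℝ, dist x (F r (γ a))) +
              ((⨅ r : ℝ, dist (γ a) (F r (γ b))) + ⨅ r : ℝ, dist (γ b) (F r y')) := by
            gcongr
            exact hDtri (γ a) (γ b) y'
      linarith
    intro s hs u hu
    rw [hDxy]
    rcases le_total s u with h | h
    · rw [main s hs u hu h, abs_of_nonpos (by linarith), neg_sub]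
    · rw [hDsymm, main u hu s hs h, abs_of_nonneg (by linarith)]
end

section
/- Let A⊆X be a Borel set invariant under the flow, i.e. F_t⁻¹(A)=A for every t∈ℝ, and assume m(A∩b⁻¹([0,1)))<∞. Then for every Borel set I⊆ℝ one has m(A∩b⁻¹(I)) = m(A∩b⁻¹([0,1)))·λ(I). (This expresses that the pushforward of m under x↦(π(x),b(x)) is the product of the quotient measure m' with one-dimensional Lebesgue measure, i.e. the flow of the Busemann function splits the measure as a product.) -/
open MeasureTheory

/-- If `F` is a measure-preserving flow on a separable metric measure space and `b`
satisfies `b (F t x) = b x - t`, then for any flow-invariant Borel set `A` with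
`m(A ∩ b⁻¹[0,1)) < ∞` one has `m(A ∩ b⁻¹(I)) = m(A ∩ b⁻¹[0,1)) · λ(I)` for every
Borel `I ⊆ ℝ`: the measure splits as a product along the flow of the Busemann
function. -/
theorem measure_splits_along_busemann_flow
    {X : Type*} [MetricSpace X] [TopologicalSpace.SeparableSpace X]
    [MeasurableSpace X] [BorelSpace X] (m : Measure X)
    (F : ℝ → X → X) (hFmeas : ∀ t : ℝ, Measurable (F t))
    (hF0 : ∀ x : X, F 0 x = x)
    (hgrp : ∀ t s : ℝ, ∀ x : X, F t (F s x) = F (t + s) x)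
    (hpres : ∀ t : ℝ, ∀ B : Set X, MeasurableSet B → m (F t ⁻¹' B) = m B)
    (b : X → ℝ) (hbmeas : Measurable b)
    (hb : ∀ (x : X) (t : ℝ), b (F t x) = b x - t)
    (A : Set X) (hA : MeasurableSet A)
    (hinv : ∀ t : ℝ, F t ⁻¹' A = A)
    (hfin : m (A ∩ b ⁻¹' Set.Ico (0:ℝ) 1) < ⊤) :
    ∀ I : Set ℝ, MeasurableSet I →
      m (A ∩ b ⁻¹' I) = m (A ∩ b ⁻¹' Set.Ico (0:ℝ) 1) * volume I := by
  -- The pushforward measure on ℝ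
  set μ : Measure ℝ := (m.restrict A).map b with hμdef
  have hμ : ∀ I : Set ℝ, MeasurableSet I → μ I = m (A ∩ b ⁻¹' I) := by
    intro I hI
    rw [hμdef, Measure.map_apply hbmeas hI, Measure.restrict_apply (hbmeas hI),
      Set.inter_comm]
  -- key translation invariance
  have key : ∀ (t : ℝ) (I : Set ℝ), MeasurableSet I →
      μ ((fun x => t + x) ⁻¹' I) = μ I := by
    intro t I hI
    have h1 : MeasurableSet ((fun x => t + x) ⁻¹' I) := (measurable_const_add t) hI
    rw [hμ _ h1, hμ _ hI]
    have hAmem : ∀ x, F (-t) x ∈ A ↔ x ∈ A := fun x => Set.ext_iff.mp (hinv (-t)) x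
    have hset : F (-t) ⁻¹' (A ∩ b ⁻¹' I) = A ∩ b ⁻¹' ((fun x => t + x) ⁻¹' I) := by
      ext x
      simp only [Set.mem_preimage, Set.mem_inter_iff, hAmem, hb]
      constructor
      · rintro ⟨hxA, hxI⟩
        refine ⟨hxA, ?_⟩
        simpa [sub_neg_eq_add, add_comm] using hxI
      · rintro ⟨hxA, hxI⟩
        refine ⟨hxA, ?_⟩
        simpa [sub_neg_eq_add, add_comm] using hxI
    rw [← hset, hpres (-t) _ (hA.inter (hbmeas hI))]
  have hinvμ : μ.IsAddLeftInvariant := by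
    constructor
    intro t
    ext s hs
    rw [Measure.map_apply (measurable_const_add t) hs]
    exact key t s hs
  -- μ of any unit interval equals c
  have hunit : ∀ a : ℝ, μ (Set.Ico a (a + 1)) = μ (Set.Ico 0 1) := by
    intro a
    have : (fun x => a + x) ⁻¹' (Set.Ico a (a + 1)) = Set.Ico (0:ℝ) 1 := by
      ext x
      simp [Set.mem_Ico]
    rw [← this, key a _ measurableSet_Ico]
  have hc : μ (Set.Ico (0:ℝ) 1) < ⊤ := by
    rw [hμ _ measurableSet_Ico]; exact hfin
  -- μ is finite on bounded intervals
  have hIco : ∀ (a : ℝ) (n : ℕ), μ (Set.Ico a (a + n)) < ⊤ := by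
    intro a n
    induction n with
    | zero => simp
    | succ k ih =>
      have hsub : Set.Ico a (a + (k + 1 : ℕ)) ⊆
          Set.Ico a (a + k) ∪ Set.Ico (a + k) (a + k + 1) := by
        intro x hx
        rcases lt_or_ge x (a + k) with h | h
        · exact Or.inl ⟨hx.1, h⟩
        · refine Or.inr ⟨h, ?_⟩
          have := hx.2
          push_cast at this ⊢
          linarith
      calc μ (Set.Ico a (a + (k + 1 : ℕ)))
          ≤ μ (Set.Ico a (a + k)) + μ (Set.Ico (a + k) (a + k + 1)) :=
            (measure_mono hsub).trans (measure_union_le _ _)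
        _ < ⊤ := by
            rw [hunit (a + k)]
            exact ENNReal.add_lt_top.mpr ⟨ih, hc⟩
  have hfinc : IsFiniteMeasureOnCompacts μ := by
    constructor
    intro K hK
    rcases hK.isBounded.subset_closedBall 0 with ⟨r, hr⟩
    have hsub : K ⊆ Set.Ico (-(|r| + 1)) (-(|r| + 1) + (2 * ⌈|r| + 1⌉₊ + 2 : ℕ)) := by
      intro x hx
      have := hr hx
      simp only [Metric.mem_closedBall, Real.dist_eq, sub_zero] at this
      have h1 : |x| ≤ |r| := le_trans this (le_abs_self r)
      have h2 : (⌈|r| + 1⌉₊ : ℝ) ≥ |r| + 1 := Nat.le_ceil _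
      constructor
      · have := abs_le.mp h1
        linarith [this.1]
      · have := abs_le.mp h1
        push_cast
        linarith [this.2]
    exact lt_of_le_of_lt (measure_mono hsub) (hIco _ _)
  -- uniqueness of Haar measure
  have heq := Measure.isAddLeftInvariant_eq_smul μ volume
  intro I hI
  have h1 : m (A ∩ b ⁻¹' I) = μ I := (hμ I hI).symm
  have h2 : m (A ∩ b ⁻¹' Set.Ico (0:ℝ) 1) = μ (Set.Ico 0 1) :=
    (hμ _ measurableSet_Ico).symm
  rw [h1, h2, heq]
  simp only [Measure.smul_apply, smul_eq_mul]
  rw [Real.volume_Ico]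
  simp [mul_comm]
end

section
/- Let N≥2 be a real number, t∈[0,1], and a,b,c>0 real numbers. Assume that for every pair of positive rationals α,β one has (c/((1−t)·α+t·β))^{−1/N} ≥ (1−t)·(a/α)^{−1/N} + t·(b/β)^{−1/N}. Then c^{−1/(N−1)} ≥ (1−t)·a^{−1/(N−1)} + t·b^{−1/(N−1)}. -/
/-- The elementary inequality used for dimension reduction: if for all positive
rationals `α, β` one has
`(c/((1-t)α+tβ))^{-1/N} ≥ (1-t)(a/α)^{-1/N} + t(b/β)^{-1/N}`,
then `c^{-1/(N-1)} ≥ (1-t)a^{-1/(N-1)} + t b^{-1/(N-1)}`. -/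
theorem dimension_reduction_inequality
    (N : ℝ) (hN : 2 ≤ N) (t : ℝ) (ht : t ∈ Set.Icc (0:ℝ) 1)
    (a b c : ℝ) (ha : 0 < a) (hb : 0 < b) (hc : 0 < c)
    (h : ∀ α β : ℚ, 0 < α → 0 < β →
      (1 - t) * (a / (α : ℝ)) ^ (-(1 / N)) + t * (b / (β : ℝ)) ^ (-(1 / N)) ≤
        (c / ((1 - t) * (α : ℝ) + t * (β : ℝ))) ^ (-(1 / N))) :
    (1 - t) * a ^ (-(1 / (N - 1))) + t * b ^ (-(1 / (N - 1))) ≤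
      c ^ (-(1 / (N - 1))) := by
  obtain ⟨ht0, ht1⟩ := ht
  have hNne : N ≠ 0 := by linarith
  have hN1ne : N - 1 ≠ 0 := by linarith
  set p : ℝ := -(1 / (N - 1)) with hp
  have hα₀ : 0 < a ^ p := Real.rpow_pos_of_pos ha p
  have hβ₀ : 0 < b ^ p := Real.rpow_pos_of_pos hb p
  set S : ℝ := (1 - t) * a ^ p + t * b ^ p with hS
  have hSpos : 0 < S := by
    rcases eq_or_lt_of_le ht0 with h0 | h0
    · rw [hS, ← h0]; simpa using hα₀
    · have h1 : 0 ≤ (1 - t) * a ^ p := mul_nonneg (by linarith) hα₀.le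
      have h2 : 0 < t * b ^ p := mul_pos h0 hβ₀
      rw [hS]; linarith
  -- rational approximating sequences from above
  have hex : ∀ (x : ℝ) (n : ℕ), ∃ q : ℚ, x < (q : ℝ) ∧ (q : ℝ) < x + 1 / (n + 1) :=
    fun x n => exists_rat_btwn (lt_add_of_pos_right x (by positivity))
  choose qa hqa1 hqa2 using fun n => hex (a ^ p) n
  choose qb hqb1 hqb2 using fun n => hex (b ^ p) n
  have hupper : ∀ x : ℝ,
      Filter.Tendsto (fun n : ℕ => x + 1 / (n + 1 : ℝ)) Filter.atTop (nhds x) := by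
    intro x
    simpa using tendsto_const_nhds.add (tendsto_one_div_add_atTop_nhds_zero_nat (𝕜 := ℝ))
  have hqa_tend : Filter.Tendsto (fun n => (qa n : ℝ)) Filter.atTop (nhds (a ^ p)) :=
    tendsto_of_tendsto_of_tendsto_of_le_of_le tendsto_const_nhds (hupper (a ^ p))
      (fun n => (hqa1 n).le) (fun n => (hqa2 n).le)
  have hqb_tend : Filter.Tendsto (fun n => (qb n : ℝ)) Filter.atTop (nhds (b ^ p)) :=
    tendsto_of_tendsto_of_tendsto_of_le_of_le tendsto_const_nhds (hupper (b ^ p))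
      (fun n => (hqb1 n).le) (fun n => (hqb2 n).le)
  have hL : Filter.Tendsto
      (fun n => (1 - t) * (a / (qa n : ℝ)) ^ (-(1 / N)) + t * (b / (qb n : ℝ)) ^ (-(1 / N)))
      Filter.atTop
      (nhds ((1 - t) * (a / a ^ p) ^ (-(1 / N)) + t * (b / b ^ p) ^ (-(1 / N)))) := by
    refine Filter.Tendsto.add (Filter.Tendsto.const_mul _ ?_) (Filter.Tendsto.const_mul _ ?_)
    · exact (tendsto_const_nhds.div hqa_tend hα₀.ne').rpow_const
        (Or.inl (div_pos ha hα₀).ne')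
    · exact (tendsto_const_nhds.div hqb_tend hβ₀.ne').rpow_const
        (Or.inl (div_pos hb hβ₀).ne')
  have hDpos : 0 < (1 - t) * a ^ p + t * b ^ p := by rw [← hS]; exact hSpos
  have hR : Filter.Tendsto
      (fun n => (c / ((1 - t) * (qa n : ℝ) + t * (qb n : ℝ))) ^ (-(1 / N)))
      Filter.atTop
      (nhds ((c / ((1 - t) * a ^ p + t * b ^ p)) ^ (-(1 / N)))) := by
    refine Filter.Tendsto.rpow_const ?_ (Or.inl (div_pos hc hDpos).ne')
    exact tendsto_const_nhds.div
      ((Filter.Tendsto.const_mul _ hqa_tend).add (Filter.Tendsto.const_mul _ hqb_tend))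
      hDpos.ne'
  have key : (1 - t) * (a / a ^ p) ^ (-(1 / N)) + t * (b / b ^ p) ^ (-(1 / N)) ≤
      (c / ((1 - t) * a ^ p + t * b ^ p)) ^ (-(1 / N)) := by
    refine le_of_tendsto_of_tendsto' hL hR (fun n => ?_)
    have hqa_pos : 0 < qa n := by
      have := hα₀.trans (hqa1 n); exact_mod_cast this
    have hqb_pos : 0 < qb n := by
      have := hβ₀.trans (hqb1 n); exact_mod_cast this
    exact h (qa n) (qb n) hqa_pos hqb_pos
  -- simplify (x / x^p)^{-1/N} = x^p
  have hsimp : ∀ x : ℝ, 0 < x → (x / x ^ p) ^ (-(1 / N)) = x ^ p := by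
    intro x hx
    rw [show x / x ^ p = x ^ (1 - p) by rw [Real.rpow_sub hx, Real.rpow_one],
      ← Real.rpow_mul hx.le]
    congr 1
    rw [hp]; field_simp; ring
  rw [hsimp a ha, hsimp b hb, ← hS] at key
  have key2 : S ≤ c ^ (-(1 / N)) * S ^ (1 / N) := by
    calc S ≤ (c / S) ^ (-(1 / N)) := key
    _ = c ^ (-(1 / N)) * S ^ (1 / N) := by
        rw [Real.div_rpow hc.le hSpos.le, Real.rpow_neg hSpos.le, div_eq_mul_inv, inv_inv]
  have key3 : S ^ ((N - 1) / N) ≤ c ^ (-(1 / N)) := by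
    have hmul : S ^ ((N - 1) / N) * S ^ (1 / N) = S := by
      rw [← Real.rpow_add hSpos, show (N - 1) / N + 1 / N = 1 by field_simp; ring, Real.rpow_one]
    have h' : S ^ ((N - 1) / N) * S ^ (1 / N) ≤ c ^ (-(1 / N)) * S ^ (1 / N) := by
      rw [hmul]; exact key2
    exact le_of_mul_le_mul_right h' (Real.rpow_pos_of_pos hSpos _)
  have hexp : (0:ℝ) ≤ N / (N - 1) := div_nonneg (by linarith) (by linarith)
  have hfin := Real.rpow_le_rpow (Real.rpow_nonneg hSpos.le _) key3 hexp
  rw [← Real.rpow_mul hSpos.le, ← Real.rpow_mul hc.le,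
    show (N - 1) / N * (N / (N - 1)) = 1 by field_simp,
    show -(1 / N) * (N / (N - 1)) = p by rw [hp]; field_simp,
    Real.rpow_one] at hfin
  exact hfin
end

section
/- Let (X,d) be a metric space, f:X→ℝ a bounded function, and t>0. Define the Hopf–Lax evolution Q_tf(x):=inf_{y∈X}( f(y) + d(x,y)²/(2t) ). Then Q_tf:X→ℝ is Lipschitz with Lipschitz constant at most 2·√((sup_X f − inf_X f)/t). -/
private lemma sqrt_add_le' (a b : ℝ) (ha : 0 ≤ a) (hb : 0 ≤ b) :
    Real.sqrt (a + b) ≤ Real.sqrt a + Real.sqrt b := by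
  rw [show Real.sqrt a + Real.sqrt b = Real.sqrt ((Real.sqrt a + Real.sqrt b) ^ 2) from
    (Real.sqrt_sq (by positivity)).symm]
  apply Real.sqrt_le_sqrt
  nlinarith [Real.sq_sqrt ha, Real.sq_sqrt hb, Real.sqrt_nonneg a, Real.sqrt_nonneg b]



/-- Lipschitz estimate for the Hopf–Lax evolution: for bounded `f : X → ℝ` and `t > 0`,
the function `Q_t f (x) = ⨅ y, (f y + dist x y² / (2t))` is Lipschitz with constant at
most `2 √((sup f − inf f)/t)`. -/
theorem hopfLax_lipschitz
    {X : Type*} [MetricSpace X] [Nonempty X]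
    (f : X → ℝ) (hfa : BddAbove (Set.range f)) (hfb : BddBelow (Set.range f))
    (t : ℝ) (ht : 0 < t) :
    ∀ x x' : X,
      |(⨅ y : X, (f y + dist x y ^ 2 / (2 * t))) -
          ⨅ y : X, (f y + dist x' y ^ 2 / (2 * t))| ≤
        2 * Real.sqrt (((⨆ z : X, f z) - ⨅ z : X, f z) / t) * dist x x' := by
  set M : ℝ := ⨆ z : X, f z with hM
  set m : ℝ := ⨅ z : X, f z with hm
  set Q : X → ℝ := fun x => ⨅ y : X, (f y + dist x y ^ 2 / (2 * t)) with hQdef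
  have hm_le : ∀ z, m ≤ f z := fun z => ciInf_le hfb z
  have hle_M : ∀ z, f z ≤ M := fun z => le_ciSup hfa z
  obtain ⟨x0⟩ := ‹Nonempty X›
  set D : ℝ := M - m with hDdef
  have hD : 0 ≤ D := sub_nonneg.2 ((hm_le x0).trans (hle_M x0))
  have hbdd : ∀ x : X, BddBelow (Set.range fun y => f y + dist x y ^ 2 / (2 * t)) := by
    intro x
    refine ⟨m, ?_⟩
    rintro _ ⟨y, rfl⟩
    have : 0 ≤ dist x y ^ 2 / (2 * t) := by positivity
    linarith [hm_le y]
  have hQ_le : ∀ x : X, Q x ≤ f x := by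
    intro x
    have := ciInf_le (hbdd x) x
    simpa using this
  have hQ_ge : ∀ x : X, m ≤ Q x := by
    intro x
    refine le_ciInf fun y => ?_
    have : 0 ≤ dist x y ^ 2 / (2 * t) := by positivity
    linarith [hm_le y]
  -- conversion lemma
  have hsq : ∀ a : ℝ, 0 ≤ a → Real.sqrt (a / t) = Real.sqrt (t * a) / t := by
    intro a ha
    rw [show a / t = (t * a) / t ^ 2 by field_simp,
      Real.sqrt_div (by positivity), Real.sqrt_sq ht.le]
  -- one-sided key estimate
  have key : ∀ x x' : X, Q x' - Q x ≤ 2 * Real.sqrt (D / t) * dist x x' := by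
    intro x x'
    set d : ℝ := dist x x' with hd
    have hd0 : 0 ≤ d := dist_nonneg
    have hB : Q x' - Q x ≤ Real.sqrt (2 * t * D) * d / t + d ^ 2 / (2 * t) := by
      have hε : ∀ ε : ℝ, ε ∈ Set.Ioi (0:ℝ) →
          Q x' - Q x ≤ Real.sqrt (2 * t * D) * d / t + d ^ 2 / (2 * t)
            + (Real.sqrt (2 * t * ε) * d / t + ε) := by
        intro ε hε
        rw [Set.mem_Ioi] at hε
        obtain ⟨y, hy⟩ := exists_lt_of_ciInf_lt (show Q x < Q x + ε by linarith)
        have hxy2 : dist x y ^ 2 ≤ 2 * t * (D + ε) := by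
          have h1 : Q x + ε ≤ f x + ε := by linarith [hQ_le x]
          have h2 : f x - f y ≤ D := by
            have := hle_M x; have := hm_le y; simp only [hDdef]; linarith
          have h3 : dist x y ^ 2 / (2 * t) < f x - f y + ε := by linarith
          have h4 : dist x y ^ 2 < 2 * t * (f x - f y + ε) := by
            rw [div_lt_iff₀ (by positivity)] at h3; linarith
          nlinarith
        have hxy : dist x y ≤ Real.sqrt (2 * t * D) + Real.sqrt (2 * t * ε) := by
          calc dist x y ≤ Real.sqrt (2 * t * (D + ε)) := by
                rw [show (2:ℝ) * t * (D + ε) = 2 * t * D + 2 * t * ε by ring] at hxy2 ⊢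
                exact (Real.le_sqrt dist_nonneg (by positivity)).2 hxy2
            _ ≤ Real.sqrt (2 * t * D) + Real.sqrt (2 * t * ε) := by
                rw [show (2:ℝ) * t * (D + ε) = 2 * t * D + 2 * t * ε by ring]
                exact sqrt_add_le' _ _ (by positivity) (by positivity)
        have hQx' : Q x' ≤ f y + dist x' y ^ 2 / (2 * t) := ciInf_le (hbdd x') y
        have htri : dist x' y ≤ dist x y + d := by
          rw [hd, dist_comm x x']; linarith [dist_triangle x' x y]
        have hsq' : dist x' y ^ 2 ≤ dist x y ^ 2 + 2 * dist x y * d + d ^ 2 := by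
          nlinarith [dist_nonneg (x := x') (y := y)]
        have : Q x' ≤ Q x + ε + (2 * dist x y * d + d ^ 2) / (2 * t) := by
          have := hQx'
          have h5 : dist x' y ^ 2 / (2 * t) ≤
              dist x y ^ 2 / (2 * t) + (2 * dist x y * d + d ^ 2) / (2 * t) := by
            have h5a : dist x' y ^ 2 / (2 * t)
                ≤ (dist x y ^ 2 + 2 * dist x y * d + d ^ 2) / (2 * t) := by gcongr
            have h5b : (dist x y ^ 2 + 2 * dist x y * d + d ^ 2) / (2 * t)
                = dist x y ^ 2 / (2 * t) + (2 * dist x y * d + d ^ 2) / (2 * t) := by ring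
            linarith
          linarith
        have h6 : (2 * dist x y * d + d ^ 2) / (2 * t)
            ≤ (Real.sqrt (2 * t * D) + Real.sqrt (2 * t * ε)) * d / t + d ^ 2 / (2 * t) := by
          have : 2 * dist x y * d ≤ 2 * (Real.sqrt (2 * t * D) + Real.sqrt (2 * t * ε)) * d :=
            by nlinarith
          rw [add_div]
          have : 2 * dist x y * d / (2 * t)
              ≤ 2 * (Real.sqrt (2 * t * D) + Real.sqrt (2 * t * ε)) * d / (2 * t) :=
            div_le_div_of_nonneg_right this (by positivity) |>.trans_eq rfl
          calc 2 * dist x y * d / (2 * t) + d ^ 2 / (2 * t)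
              ≤ 2 * (Real.sqrt (2 * t * D) + Real.sqrt (2 * t * ε)) * d / (2 * t)
                + d ^ 2 / (2 * t) := by linarith
            _ = (Real.sqrt (2 * t * D) + Real.sqrt (2 * t * ε)) * d / t + d ^ 2 / (2 * t) := by
                field_simp
        have hrhs : (Real.sqrt (2 * t * D) + Real.sqrt (2 * t * ε)) * d / t
            = Real.sqrt (2 * t * D) * d / t + Real.sqrt (2 * t * ε) * d / t := by
          field_simp
        linarith [h6, this, hrhs ▸ h6]
      have hten : Filter.Tendsto
          (fun ε : ℝ => Real.sqrt (2 * t * D) * d / t + d ^ 2 / (2 * t)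
            + (Real.sqrt (2 * t * ε) * d / t + ε)) (nhdsWithin 0 (Set.Ioi 0))
          (nhds (Real.sqrt (2 * t * D) * d / t + d ^ 2 / (2 * t))) := by
        have hc : Continuous (fun ε : ℝ => Real.sqrt (2 * t * D) * d / t + d ^ 2 / (2 * t)
            + (Real.sqrt (2 * t * ε) * d / t + ε)) := by
          apply Continuous.add
          · exact continuous_const
          · exact ((Real.continuous_sqrt.comp (by continuity)).mul continuous_const |>.div_const t).add continuous_id
        have := hc.tendsto 0
        simp only [mul_zero, Real.sqrt_zero, zero_mul, zero_div, add_zero] at this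
        exact this.mono_left nhdsWithin_le_nhds
      exact ge_of_tendsto hten (eventually_nhdsWithin_of_forall hε)
    -- now case split
    have hL : 2 * Real.sqrt (D / t) * d = 2 * Real.sqrt (t * D) * d / t := by
      rw [hsq D hD]; field_simp
    rw [hL]
    by_cases hcase : d ≤ Real.sqrt (t * D) / 2
    · -- small d
      have h2 : Real.sqrt (2 * t * D) ≤ (7/4) * Real.sqrt (t * D) := by
        rw [show (2:ℝ) * t * D = 2 * (t * D) by ring,
          Real.sqrt_mul (by norm_num) (t * D)]
        have : Real.sqrt 2 ≤ 7/4 := by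
          rw [show (7:ℝ)/4 = Real.sqrt ((7/4)^2) from (Real.sqrt_sq (by norm_num)).symm]
          apply Real.sqrt_le_sqrt; norm_num
        nlinarith [Real.sqrt_nonneg (t * D)]
      have h3 : d ^ 2 / (2 * t) ≤ Real.sqrt (t * D) * d / (4 * t) := by
        have : d ^ 2 ≤ Real.sqrt (t * D) / 2 * d := by nlinarith
        rw [div_le_div_iff₀ (by positivity) (by positivity)]
        nlinarith
      have h4 : Real.sqrt (2 * t * D) * d / t ≤ (7/4) * Real.sqrt (t * D) * d / t := by
        gcongr
      calc Q x' - Q x ≤ Real.sqrt (2 * t * D) * d / t + d ^ 2 / (2 * t) := hB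
        _ ≤ (7/4) * Real.sqrt (t * D) * d / t + Real.sqrt (t * D) * d / (4 * t) := by linarith
        _ = 2 * Real.sqrt (t * D) * d / t := by field_simp; ring
    · -- large d
      push_neg at hcase
      have h1 : Q x' - Q x ≤ D := by
        have := hQ_le x'; have := hQ_ge x
        have := hle_M x'
        simp only [hDdef]; linarith
      have h2 : D ≤ 2 * Real.sqrt (t * D) * d / t := by
        have hsqsq : Real.sqrt (t * D) ^ 2 = t * D := Real.sq_sqrt (by positivity)
        rw [le_div_iff₀ ht]
        nlinarith [Real.sqrt_nonneg (t * D)]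
      linarith
  -- conclude
  intro x x'
  rw [abs_sub_le_iff]
  constructor
  · have := key x' x
    rw [dist_comm x' x] at this
    exact this
  · exact key x x'
end

section
/- For every natural number n and every C₁>0 there exists a constant C, depending only on n, N and C₁, such that the following holds: for every t>0 and every Borel function ρ:X→[0,∞) satisfying ρ(y) ≤ C₁·m(B_{√t}(x))⁻¹·exp(−d(x,y)²/(5t)) for all y∈X, one has ∫_X d(x,y)^n · ρ(y) dm(y) ≤ C·t^{n/2}. (This is the moment estimate for the heat kernel used in the paper.) -/
open MeasureTheory


lemma hk_summable (M : ℕ) :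
    Summable (fun k : ℕ => ((k : ℝ) + 1) ^ M * Real.exp (-(1:ℝ)/5) ^ k) := by
  set r : ℝ := Real.exp (-(1:ℝ)/5) with hr_def
  have hr0 : 0 < r := Real.exp_pos _
  have hr : ‖r‖ < 1 := by
    rw [Real.norm_eq_abs, abs_of_pos hr0]
    exact Real.exp_lt_one_iff.2 (by norm_num)
  have h := summable_pow_mul_geometric_of_norm_lt_one (R := ℝ) M hr
  have h2 : Summable (fun k : ℕ => ((k + 1 : ℕ) : ℝ) ^ M * r ^ (k + 1)) :=
    (summable_nat_add_iff 1).2 h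
  have h3 := h2.mul_left r⁻¹
  refine h3.congr fun k => ?_
  push_cast
  rw [pow_succ]
  field_simp

lemma hk_bg (N : ℝ) (hN : 1 ≤ N) (s : ℝ → ℝ)
    (hs_nonneg : ∀ u, 0 ≤ s u)
    (hanti : AntitoneOn (fun r : ℝ => s r / r ^ (N - 1)) (Set.Ioi (0:ℝ)))
    (r lam : ℝ) (hr : 0 < r) (hlam : 1 ≤ lam)
    (hint : IntegrableOn s (Set.Ioo 0 (lam * r))) :
    ∫ u in Set.Ioo (0:ℝ) (lam * r), s u ≤ lam ^ N * ∫ u in Set.Ioo (0:ℝ) r, s u := by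
  have hlam0 : (0:ℝ) < lam := lt_of_lt_of_le one_pos hlam
  have hlr : 0 < lam * r := mul_pos hlam0 hr
  have hrpow1 : (1:ℝ) ≤ lam ^ (N - 1) := Real.one_le_rpow hlam (by linarith)
  have hint' : IntegrableOn s (Set.Ioo 0 r) :=
    hint.mono_set (Set.Ioo_subset_Ioo le_rfl (le_mul_of_one_le_left hr.le hlam))
  have hii : IntervalIntegrable s volume 0 (lam * r) := by
    rw [intervalIntegrable_iff_integrableOn_Ioo_of_le hlr.le]; exact hint
  have hii' : IntervalIntegrable s volume 0 r := by
    rw [intervalIntegrable_iff_integrableOn_Ioo_of_le hr.le]; exact hint'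
  have hcomp : IntervalIntegrable (fun v => s (lam * v)) volume 0 r := by
    have := hii.comp_mul_left (c := lam)
    simpa [hlam0.ne'] using this
  have hpt : ∀ v ∈ Set.Icc (0:ℝ) r, s (lam * v) ≤ lam ^ (N - 1) * s v := by
    rintro v ⟨hv0, hvr⟩
    rcases eq_or_lt_of_le hv0 with h | h
    · subst h
      simpa using le_mul_of_one_le_left (hs_nonneg 0) hrpow1
    · have hvl : v ≤ lam * v := le_mul_of_one_le_left h.le hlam
      have ha := hanti (Set.mem_Ioi.2 h) (Set.mem_Ioi.2 (lt_of_lt_of_le h hvl)) hvl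
      simp only at ha
      have hvpow : (0:ℝ) < v ^ (N - 1) := Real.rpow_pos_of_pos h _
      have hmul : (lam * v) ^ (N - 1) = lam ^ (N - 1) * v ^ (N - 1) :=
        Real.mul_rpow hlam0.le h.le
      rw [div_le_div_iff₀ (by rw [hmul]; positivity) hvpow] at ha
      rw [hmul] at ha
      rw [show s v * (lam ^ (N - 1) * v ^ (N - 1)) = (lam ^ (N - 1) * s v) * v ^ (N - 1) by ring]
        at ha
      exact le_of_mul_le_mul_right ha hvpow
  have h1 : ∫ u in Set.Ioo (0:ℝ) (lam * r), s u = ∫ u in (0:ℝ)..(lam * r), s u := by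
    rw [intervalIntegral.integral_of_le hlr.le, integral_Ioc_eq_integral_Ioo]
  have h2 : ∫ u in Set.Ioo (0:ℝ) r, s u = ∫ u in (0:ℝ)..r, s u := by
    rw [intervalIntegral.integral_of_le hr.le, integral_Ioc_eq_integral_Ioo]
  have h3 : ∫ u in (0:ℝ)..(lam * r), s u = lam * ∫ v in (0:ℝ)..r, s (lam * v) := by
    rw [intervalIntegral.integral_comp_mul_left (f := s) (hlam0.ne')]
    simp [smul_eq_mul, mul_assoc]
    rw [← mul_assoc, mul_inv_cancel₀ hlam0.ne', one_mul]
  have h4 : ∫ v in (0:ℝ)..r, s (lam * v) ≤ ∫ v in (0:ℝ)..r, lam ^ (N - 1) * s v := by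
    apply intervalIntegral.integral_mono_on hr.le hcomp (hii'.const_mul _) hpt
  have h5 : ∫ v in (0:ℝ)..r, lam ^ (N - 1) * s v = lam ^ (N - 1) * ∫ v in (0:ℝ)..r, s v :=
    intervalIntegral.integral_const_mul _ _
  calc ∫ u in Set.Ioo (0:ℝ) (lam * r), s u
      = lam * ∫ v in (0:ℝ)..r, s (lam * v) := by rw [h1, h3]
    _ ≤ lam * (lam ^ (N - 1) * ∫ v in (0:ℝ)..r, s v) := by
        apply mul_le_mul_of_nonneg_left _ hlam0.le
        rw [← h5]; exact h4
    _ = lam ^ N * ∫ u in Set.Ioo (0:ℝ) r, s u := by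
        rw [h2, ← mul_assoc]
        congr 1
        have h6 := Real.rpow_add hlam0 1 (N - 1)
        rw [Real.rpow_one] at h6
        rw [← h6]
        norm_num


/-- Moment estimate for the heat kernel: under Bishop–Gromov type hypotheses
(`m(B_r(x)) = ∫₀^r s(u) du` with `s(r)/r^{N-1}` nonincreasing), for every `n ∈ ℕ`
and `C₁ > 0` there is a constant `C` depending only on `n`, `N`, `C₁` such that any
nonnegative `ρ` obeying the Gaussian bound
`ρ(y) ≤ C₁ m(B_{√t}(x))⁻¹ exp(−d(x,y)²/(5t))` satisfies
`∫ d(x,y)^n ρ(y) dm(y) ≤ C t^{n/2}`. -/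
theorem heat_kernel_moment_estimate
    (N : ℝ) (hN : 1 ≤ N) (n : ℕ) (C₁ : ℝ) (hC₁ : 0 < C₁) :
    ∃ C : ℝ, 0 < C ∧
      ∀ (X : Type) [MetricSpace X] [MeasurableSpace X] [BorelSpace X]
        (m : Measure X) (x : X) (s : ℝ → ℝ),
        Measurable s →
        (∀ u : ℝ, 0 ≤ s u) →
        (∀ r : ℝ, 0 < r → 0 < m (Metric.ball x r)) →
        (∀ r : ℝ, 0 < r →
          m (Metric.ball x r) = ENNReal.ofReal (∫ u in Set.Ioo (0:ℝ) r, s u)) →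
        AntitoneOn (fun r : ℝ => s r / r ^ (N - 1)) (Set.Ioi (0:ℝ)) →
        ∀ t : ℝ, 0 < t → ∀ ρ : X → ℝ, Measurable ρ → (∀ y : X, 0 ≤ ρ y) →
          (∀ y : X, ρ y ≤ C₁ / (m (Metric.ball x (Real.sqrt t))).toReal *
            Real.exp (-(dist x y) ^ 2 / (5 * t))) →
          ∫⁻ y, ENNReal.ofReal (dist x y ^ n * ρ y) ∂m ≤
            ENNReal.ofReal (C * t ^ ((n : ℝ) / 2)) := by
  classical
  set r0 : ℝ := Real.exp (-(1:ℝ)/5) with hr0_def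
  have hr0_pos : 0 < r0 := Real.exp_pos _
  set M : ℕ := ⌈N⌉₊ + n with hM_def
  set B : ℝ := ∑' k : ℕ, ((k : ℝ) + 1) ^ M * r0 ^ k with hB_def
  have hB_nonneg : 0 ≤ B := tsum_nonneg fun k => by positivity
  refine ⟨C₁ * (B + 1), by positivity, ?_⟩
  intro X _ _ _ m x s hs_meas hs_nonneg hpos hvol hanti t ht ρ hρ_meas hρ_nonneg hρ_le
  set σ := Real.sqrt t with hσ_def
  have hσ : 0 < σ := Real.sqrt_pos.2 ht
  have hσ2 : σ ^ 2 = t := Real.sq_sqrt ht.le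
  have hint : ∀ R : ℝ, 0 < R → IntegrableOn s (Set.Ioo 0 R) := by
    intro R hR
    by_contra h
    have h0 : (∫ u in Set.Ioo (0:ℝ) R, s u) = 0 := integral_undef h
    have hp := hpos R hR
    rw [hvol R hR, h0] at hp
    simp at hp
  have hIpos : ∀ R : ℝ, 0 < R → 0 < ∫ u in Set.Ioo (0:ℝ) R, s u := by
    intro R hR
    have hp := hpos R hR
    rw [hvol R hR] at hp
    exact ENNReal.ofReal_pos.mp hp
  set I : ℝ := ∫ u in Set.Ioo (0:ℝ) σ, s u with hI_def
  have hIσ : 0 < I := hIpos σ hσ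
  have hVt : (m (Metric.ball x σ)).toReal = I := by
    rw [hvol σ hσ, ENNReal.toReal_ofReal hIσ.le]
  have hσn : σ ^ n = t ^ ((n:ℝ)/2) := by
    rw [hσ_def, Real.sqrt_eq_rpow, ← Real.rpow_natCast (t ^ ((1:ℝ)/2)) n,
      ← Real.rpow_mul ht.le]
    congr 1
    ring
  have htp : 0 ≤ t ^ ((n:ℝ)/2) := Real.rpow_nonneg ht.le _
  set A : ℕ → Set X := fun k => Metric.ball x (((k:ℝ) + 1) * σ) \ Metric.ball x ((k:ℝ) * σ)
    with hA_def
  have hcover : (⋃ k, A k) = Set.univ := by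
    apply Set.eq_univ_of_forall
    intro y
    have hd0 : 0 ≤ dist y x := dist_nonneg
    refine Set.mem_iUnion.2 ⟨⌊dist y x / σ⌋₊, ?_, ?_⟩
    · rw [Metric.mem_ball]
      have h1 : dist y x / σ < ⌊dist y x / σ⌋₊ + 1 := Nat.lt_floor_add_one _
      calc dist y x = dist y x / σ * σ := by field_simp
        _ < ((⌊dist y x / σ⌋₊ : ℝ) + 1) * σ := mul_lt_mul_of_pos_right h1 hσ
    · simp only [Metric.mem_ball, not_lt]
      have h1 : ((⌊dist y x / σ⌋₊ : ℝ)) ≤ dist y x / σ := Nat.floor_le (by positivity)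
      calc ((⌊dist y x / σ⌋₊ : ℝ)) * σ ≤ dist y x / σ * σ := mul_le_mul_of_nonneg_right h1 hσ.le
        _ = dist y x := by field_simp
  have key : ∀ k : ℕ, ∫⁻ y in A k, ENNReal.ofReal (dist x y ^ n * ρ y) ∂m ≤
      ENNReal.ofReal ((C₁ * t ^ ((n:ℝ)/2)) * (((k:ℝ) + 1) ^ M * r0 ^ k)) := by
    intro k
    have hk1 : (1:ℝ) ≤ (k:ℝ) + 1 := by
      have : (0:ℝ) ≤ (k:ℝ) := Nat.cast_nonneg k
      linarith
    have hkσ : 0 < ((k:ℝ) + 1) * σ := by positivity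
    set D : ℝ := (((k:ℝ) + 1) * σ) ^ n * (C₁ / I * Real.exp (-(k:ℝ)^2 / 5)) with hD
    have hD_nonneg : 0 ≤ D := by
      rw [hD]; positivity
    have hpt : ∀ y ∈ A k, ENNReal.ofReal (dist x y ^ n * ρ y) ≤ ENNReal.ofReal D := by
      rintro y ⟨hy1, hy2⟩
      apply ENNReal.ofReal_le_ofReal
      have hd1 : dist x y < ((k:ℝ) + 1) * σ := by
        rw [dist_comm]; exact Metric.mem_ball.mp hy1
      have hd2 : (k:ℝ) * σ ≤ dist x y := by
        rw [dist_comm]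
        exact not_lt.mp (fun h => hy2 (Metric.mem_ball.mpr h))
      have hexp : Real.exp (-(dist x y) ^ 2 / (5 * t)) ≤ Real.exp (-(k:ℝ)^2 / 5) := by
        apply Real.exp_le_exp.2
        have h5t : (0:ℝ) < 5 * t := by linarith
        have hsq : ((k:ℝ) * σ) ^ 2 ≤ (dist x y) ^ 2 :=
          pow_le_pow_left₀ (by positivity) hd2 2
        rw [neg_div, neg_div, neg_le_neg_iff, div_le_div_iff₀ (by norm_num) h5t]
        nlinarith [hσ2]
      have hρy := hρ_le y
      rw [hVt] at hρy
      have h1 : dist x y ^ n ≤ (((k:ℝ) + 1) * σ) ^ n :=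
        pow_le_pow_left₀ dist_nonneg hd1.le n
      have h2 : ρ y ≤ C₁ / I * Real.exp (-(k:ℝ)^2 / 5) :=
        hρy.trans (mul_le_mul_of_nonneg_left hexp (by positivity))
      exact mul_le_mul h1 h2 (hρ_nonneg y) (by positivity)
    have hmeasA : MeasurableSet (A k) :=
      measurableSet_ball.diff measurableSet_ball
    have hbg := hk_bg N hN s hs_nonneg hanti σ ((k:ℝ) + 1) hσ hk1 (hint _ hkσ)
    have hD_eq : D * (((k:ℝ) + 1) ^ N * I) =
        (C₁ * t ^ ((n:ℝ)/2)) *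
          (((k:ℝ) + 1) ^ n * (((k:ℝ) + 1) ^ N * Real.exp (-(k:ℝ)^2 / 5))) := by
      rw [hD, mul_pow, hσn]
      field_simp
    have hfinal : ((k:ℝ) + 1) ^ n * (((k:ℝ) + 1) ^ N * Real.exp (-(k:ℝ)^2 / 5)) ≤
        ((k:ℝ) + 1) ^ M * r0 ^ k := by
      have hN' : ((k:ℝ) + 1) ^ N ≤ ((k:ℝ) + 1) ^ (⌈N⌉₊ : ℕ) := by
        rw [← Real.rpow_natCast ((k:ℝ) + 1) ⌈N⌉₊]
        exact Real.rpow_le_rpow_of_exponent_le hk1 (Nat.le_ceil N)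
      have hexp' : Real.exp (-(k:ℝ)^2 / 5) ≤ r0 ^ k := by
        rw [hr0_def, ← Real.exp_nat_mul]
        apply Real.exp_le_exp.2
        have hk2 : (k:ℝ) ≤ (k:ℝ) ^ 2 := by
          have := Nat.le_self_pow (two_ne_zero) k
          exact_mod_cast this
        nlinarith
      have h1 : (0:ℝ) ≤ ((k:ℝ) + 1) ^ N := Real.rpow_nonneg (by positivity) _
      calc ((k:ℝ) + 1) ^ n * (((k:ℝ) + 1) ^ N * Real.exp (-(k:ℝ)^2 / 5)) ≤
          ((k:ℝ) + 1) ^ n * (((k:ℝ) + 1) ^ (⌈N⌉₊:ℕ) * r0 ^ k) := by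
            apply mul_le_mul_of_nonneg_left _ (by positivity)
            exact mul_le_mul hN' hexp' (Real.exp_pos _).le (by positivity)
        _ = ((k:ℝ) + 1) ^ M * r0 ^ k := by
            rw [hM_def, pow_add]; ring
    calc ∫⁻ y in A k, ENNReal.ofReal (dist x y ^ n * ρ y) ∂m
        ≤ ∫⁻ _ in A k, ENNReal.ofReal D ∂m := setLIntegral_mono' hmeasA hpt
      _ = ENNReal.ofReal D * m (A k) := setLIntegral_const _ _
      _ ≤ ENNReal.ofReal D * m (Metric.ball x (((k:ℝ) + 1) * σ)) :=
          mul_le_mul_right (measure_mono Set.diff_subset) _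
      _ = ENNReal.ofReal (D * ∫ u in Set.Ioo (0:ℝ) (((k:ℝ) + 1) * σ), s u) := by
          rw [hvol _ hkσ, ← ENNReal.ofReal_mul hD_nonneg]
      _ ≤ ENNReal.ofReal (D * (((k:ℝ) + 1) ^ N * I)) :=
          ENNReal.ofReal_le_ofReal (mul_le_mul_of_nonneg_left hbg hD_nonneg)
      _ ≤ ENNReal.ofReal ((C₁ * t ^ ((n:ℝ)/2)) * (((k:ℝ) + 1) ^ M * r0 ^ k)) := by
          apply ENNReal.ofReal_le_ofReal
          rw [hD_eq]
          exact mul_le_mul_of_nonneg_left hfinal (by positivity)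
  calc ∫⁻ y, ENNReal.ofReal (dist x y ^ n * ρ y) ∂m
      = ∫⁻ y in ⋃ k, A k, ENNReal.ofReal (dist x y ^ n * ρ y) ∂m := by
        rw [hcover, Measure.restrict_univ]
    _ ≤ ∑' k, ∫⁻ y in A k, ENNReal.ofReal (dist x y ^ n * ρ y) ∂m :=
        lintegral_iUnion_le _ _
    _ ≤ ∑' k : ℕ, ENNReal.ofReal ((C₁ * t ^ ((n:ℝ)/2)) * (((k:ℝ) + 1) ^ M * r0 ^ k)) :=
        ENNReal.tsum_le_tsum key
    _ = ∑' k : ℕ, ENNReal.ofReal (C₁ * t ^ ((n:ℝ)/2)) *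
          ENNReal.ofReal (((k:ℝ) + 1) ^ M * r0 ^ k) := by
        apply tsum_congr; intro k
        rw [← ENNReal.ofReal_mul (by positivity)]
    _ = ENNReal.ofReal (C₁ * t ^ ((n:ℝ)/2)) *
          ∑' k : ℕ, ENNReal.ofReal (((k:ℝ) + 1) ^ M * r0 ^ k) := ENNReal.tsum_mul_left
    _ = ENNReal.ofReal (C₁ * t ^ ((n:ℝ)/2)) * ENNReal.ofReal B := by
        congr 1
        rw [hB_def]
        exact (ENNReal.ofReal_tsum_of_nonneg
          (fun k => mul_nonneg (by positivity) (pow_nonneg hr0_pos.le k))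
          (hk_summable M)).symm
    _ ≤ ENNReal.ofReal (C₁ * (B + 1) * t ^ ((n:ℝ)/2)) := by
        rw [← ENNReal.ofReal_mul (by positivity)]
        apply ENNReal.ofReal_le_ofReal
        nlinarith
end

section
/- For every C₁>0 and every t>0 there exists a constant C, depending only on N, C₁ and t, such that every Borel function ρ:X→[0,∞) satisfying ρ(y) ≤ C₁·m(B_{√t}(x))⁻¹·exp(−d(x,y)²/(5t)) for all y∈X obeys ∫_X e^{d(x,y)} · ρ(y) dm(y) ≤ C. (This is the exponential integrability estimate for the heat kernel, showing the heat semigroup maps the weighted space DH(X)=L¹(X, e^{−d(·,x̄)}m) into itself.) -/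
open MeasureTheory

open Real Set in
lemma aux_summable (N : ℝ) :
    Summable (fun k : ℕ => ((k : ℝ) + 1) ^ N * Real.exp (-(k : ℝ) ^ 2 / 10)) := by
  set M := ⌈N⌉₊ with hM
  set q := Real.exp (-(1/10)) with hq
  have hq0 : 0 < q := Real.exp_pos _
  have hq1 : q < 1 := by
    rw [hq, Real.exp_lt_one_iff]; norm_num
  have hsum0 : Summable (fun k : ℕ => (k : ℝ) ^ M * q ^ k) :=
    summable_pow_mul_geometric_of_norm_lt_one M (by rw [Real.norm_eq_abs, abs_of_pos hq0]; exact hq1)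
  have hsum1 : Summable (fun k : ℕ => ((k : ℝ) + 1) ^ M * q ^ (k + 1)) := by
    have := (summable_nat_add_iff 1).mpr hsum0
    simpa [Nat.cast_add] using this
  have hsum2 : Summable (fun k : ℕ => ((k : ℝ) + 1) ^ M * q ^ k) := by
    have := hsum1.mul_right q⁻¹
    apply this.congr
    intro k
    field_simp [pow_succ]
    ring
  apply Summable.of_nonneg_of_le ?_ ?_ hsum2
  · intro k
    have h0 : (0:ℝ) < ((k:ℝ)+1) ^ N := Real.rpow_pos_of_pos (by positivity) _
    positivity
  intro k
  have h1 : ((k:ℝ)+1) ^ N ≤ ((k:ℝ)+1) ^ M := by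
    rw [← Real.rpow_natCast ((k:ℝ)+1) M]
    apply Real.rpow_le_rpow_of_exponent_le (by simp) (Nat.le_ceil N)
  have h2 : Real.exp (-(k:ℝ)^2/10) ≤ q ^ k := by
    rw [hq, ← Real.exp_nat_mul, Real.exp_le_exp]
    have hk : (k:ℝ) ≤ (k:ℝ)^2 := by
      have := Nat.le_self_pow (n := 2) (by norm_num) k
      exact_mod_cast this
    linarith
  have hexp : 0 ≤ Real.exp (-(k:ℝ)^2/10) := (Real.exp_pos _).le
  have h1' : (0:ℝ) < ((k:ℝ)+1) ^ N := Real.rpow_pos_of_pos (by positivity) _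
  exact mul_le_mul h1 h2 hexp (by positivity)

open Real Set in
lemma aux_BG {X : Type} [MetricSpace X] [MeasurableSpace X]
    (m : Measure X) (x : X) (s : ℝ → ℝ) (N : ℝ) (hN : 1 ≤ N)
    (hs0 : ∀ u : ℝ, 0 ≤ s u)
    (hpos : ∀ r : ℝ, 0 < r → 0 < m (Metric.ball x r))
    (hvol : ∀ r : ℝ, 0 < r →
      m (Metric.ball x r) = ENNReal.ofReal (∫ u in Set.Ioo (0:ℝ) r, s u))
    (hanti : AntitoneOn (fun r : ℝ => s r / r ^ (N - 1)) (Set.Ioi (0:ℝ)))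
    {r R : ℝ} (hr : 0 < r) (hrR : r ≤ R) :
    m (Metric.ball x R) ≤ ENNReal.ofReal ((R/r) ^ N) * m (Metric.ball x r) := by
  have hR : 0 < R := lt_of_lt_of_le hr hrR
  set c := R / r with hc
  have hc1 : 1 ≤ c := (one_le_div hr).mpr hrR
  have hc0 : 0 < c := lt_of_lt_of_le one_pos hc1
  have hcr : c * r = R := div_mul_cancel₀ R hr.ne'
  -- integrability of s on Ioo 0 R
  have hIntR : IntegrableOn s (Ioo (0:ℝ) R) := by
    by_contra h
    have : (∫ u in Ioo (0:ℝ) R, s u) = 0 := integral_undef h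
    have := hvol R hR
    rw [this] at *
    have := hpos R hR
    simp_all
  have hIntr : IntegrableOn s (Ioo (0:ℝ) r) :=
    hIntR.mono_set (Ioo_subset_Ioo le_rfl hrR)
  -- pointwise bound on Ioo 0 r
  have hpt : ∀ u ∈ Ioo (0:ℝ) r, s (c * u) ≤ c ^ (N-1) * s u := by
    intro u hu
    have hu0 : 0 < u := hu.1
    have hcu : 0 < c * u := mul_pos hc0 hu0
    have hle : u ≤ c * u := le_mul_of_one_le_left hu0.le hc1
    have h := hanti (mem_Ioi.mpr hu0) (mem_Ioi.mpr hcu) hle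
    simp only at h
    have hup : (0:ℝ) < u ^ (N-1) := Real.rpow_pos_of_pos hu0 _
    have hcup : (0:ℝ) < (c*u) ^ (N-1) := Real.rpow_pos_of_pos hcu _
    rw [div_le_div_iff₀ hcup hup] at h
    have hcu_eq : (c*u) ^ (N-1) = c ^ (N-1) * u ^ (N-1) :=
      Real.mul_rpow hc0.le hu0.le
    rw [hcu_eq] at h
    have h2 : s (c*u) * u^(N-1) ≤ (c^(N-1) * s u) * u^(N-1) := by
      calc s (c*u) * u^(N-1) ≤ s u * (c^(N-1) * u^(N-1)) := h
        _ = (c^(N-1) * s u) * u^(N-1) := by ring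
    exact le_of_mul_le_mul_right h2 hup
  -- integral substitution
  have hsub : (∫ u in Ioo (0:ℝ) R, s u) = c * ∫ u in Ioo (0:ℝ) r, s (c * u) := by
    have h1 : (∫ u in (0:ℝ)..r, s (c * u)) = c⁻¹ • ∫ u in (c*0:ℝ)..(c*r), s u :=
      intervalIntegral.integral_comp_mul_left s hc0.ne'
    rw [mul_zero, hcr] at h1
    rw [intervalIntegral.integral_of_le hr.le, integral_Ioc_eq_integral_Ioo] at h1
    rw [intervalIntegral.integral_of_le hR.le, integral_Ioc_eq_integral_Ioo] at h1
    rw [h1, smul_eq_mul, ← mul_assoc, mul_inv_cancel₀ hc0.ne', one_mul]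
  -- integral comparison
  have hcomp : (∫ u in Ioo (0:ℝ) r, s (c * u)) ≤ c ^ (N-1) * ∫ u in Ioo (0:ℝ) r, s u := by
    rw [← integral_const_mul]
    apply integral_mono_of_nonneg
    · filter_upwards with u using hs0 _
    · exact (hIntr.const_mul _)
    · filter_upwards [ae_restrict_mem measurableSet_Ioo] with u hu using hpt u hu
  have hkey : (∫ u in Ioo (0:ℝ) R, s u) ≤ c ^ N * ∫ u in Ioo (0:ℝ) r, s u := by
    rw [hsub]
    calc c * ∫ u in Ioo (0:ℝ) r, s (c*u) ≤ c * (c ^ (N-1) * ∫ u in Ioo (0:ℝ) r, s u) := by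
          exact mul_le_mul_of_nonneg_left hcomp hc0.le
      _ = c ^ N * ∫ u in Ioo (0:ℝ) r, s u := by
          rw [← mul_assoc]
          congr 1
          nth_rewrite 1 [← Real.rpow_one c]
          rw [← Real.rpow_add hc0]
          norm_num
  rw [hvol R hR, hvol r hr, ← ENNReal.ofReal_mul (by positivity)]
  exact ENNReal.ofReal_le_ofReal hkey

open Real Set in
/-- Exponential integrability estimate for the heat kernel. -/
theorem heat_kernel_exponential_estimate
    (N : ℝ) (hN : 1 ≤ N) (C₁ : ℝ) (hC₁ : 0 < C₁) (t : ℝ) (ht : 0 < t) :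
    ∃ C : ℝ, 0 < C ∧
      ∀ (X : Type) [MetricSpace X] [MeasurableSpace X] [BorelSpace X]
        (m : Measure X) (x : X) (s : ℝ → ℝ),
        Measurable s →
        (∀ u : ℝ, 0 ≤ s u) →
        (∀ r : ℝ, 0 < r → 0 < m (Metric.ball x r)) →
        (∀ r : ℝ, 0 < r →
          m (Metric.ball x r) = ENNReal.ofReal (∫ u in Set.Ioo (0:ℝ) r, s u)) →
        AntitoneOn (fun r : ℝ => s r / r ^ (N - 1)) (Set.Ioi (0:ℝ)) →
        ∀ ρ : X → ℝ, Measurable ρ → (∀ y : X, 0 ≤ ρ y) →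
          (∀ y : X, ρ y ≤ C₁ / (m (Metric.ball x (Real.sqrt t))).toReal *
            Real.exp (-(dist x y) ^ 2 / (5 * t))) →
          ∫⁻ y, ENNReal.ofReal (Real.exp (dist x y) * ρ y) ∂m ≤ ENNReal.ofReal C := by
  set S := ∑' k : ℕ, ((k : ℝ) + 1) ^ N * Real.exp (-(k : ℝ) ^ 2 / 10) with hS
  have hSsum := aux_summable N
  have hterm_nonneg : ∀ k : ℕ, 0 ≤ ((k : ℝ) + 1) ^ N * Real.exp (-(k : ℝ) ^ 2 / 10) := by
    intro k
    have : (0:ℝ) < ((k:ℝ)+1) ^ N := Real.rpow_pos_of_pos (by positivity) _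
    positivity
  have hSpos : 0 < S := by
    apply Summable.tsum_pos hSsum hterm_nonneg 0
    have : (0:ℝ) < ((0:ℝ)+1) ^ N := Real.rpow_pos_of_pos (by norm_num) _
    simpa using by positivity
  refine ⟨C₁ * Real.exp (5*t/2) * S, by positivity, ?_⟩
  intro X _ _ _ m x s hsmeas hs0 hpos hvol hanti ρ hρmeas hρ0 hρbnd
  set st := Real.sqrt t with hst_def
  have hst : 0 < st := Real.sqrt_pos.mpr ht
  have hst2 : st ^ 2 = t := Real.sq_sqrt ht.le
  set V := m (Metric.ball x st) with hV_def
  have hVpos : 0 < V := hpos st hst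
  have hVtop : V ≠ ⊤ := by rw [hV_def, hvol st hst]; exact ENNReal.ofReal_ne_top
  set V' := V.toReal with hV'_def
  have hV'pos : 0 < V' := ENNReal.toReal_pos hVpos.ne' hVtop
  -- annuli
  set A : ℕ → Set X := fun k => (fun y => dist x y) ⁻¹' (Set.Ico ((k:ℝ)*st) (((k:ℝ)+1)*st))
    with hA_def
  have hdistmeas : Measurable fun y : X => dist x y :=
    (continuous_const.dist continuous_id).measurable
  have hAmeas : ∀ k, MeasurableSet (A k) := fun k => hdistmeas measurableSet_Ico
  have hAdisj : Pairwise (Function.onFun Disjoint A) := by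
    have hd : ∀ i j : ℕ, i < j → Disjoint (A i) (A j) := by
      intro i j hij
      rw [Set.disjoint_left]
      intro y hyi hyj
      have h1 : dist x y < ((i:ℝ)+1)*st := hyi.2
      have h2 : ((j:ℝ))*st ≤ dist x y := hyj.1
      have hij' : ((i:ℝ)+1) ≤ (j:ℝ) := by exact_mod_cast Nat.succ_le_of_lt hij
      have : ((i:ℝ)+1)*st ≤ (j:ℝ)*st := mul_le_mul_of_nonneg_right hij' hst.le
      linarith
    intro i j hij
    rcases hij.lt_or_gt with h | h
    · exact hd i j h
    · exact (hd j i h).symm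
  have hAunion : ⋃ k, A k = Set.univ := by
    ext y
    simp only [Set.mem_iUnion, Set.mem_univ, iff_true, hA_def, Set.mem_preimage,
      Set.mem_Ico]
    refine ⟨⌊dist x y / st⌋₊, ?_, ?_⟩
    · rw [← le_div_iff₀ hst]
      exact Nat.floor_le (by positivity)
    · rw [← div_lt_iff₀ hst]
      exact Nat.lt_floor_add_one _
  set a : ℕ → ℝ := fun k => C₁ * Real.exp (5*t/2) *
    (((k:ℝ)+1)^N * Real.exp (-(k:ℝ)^2/10)) with ha_def
  have hbound : ∀ k : ℕ, (∫⁻ y in A k, ENNReal.ofReal (Real.exp (dist x y) * ρ y) ∂m)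
      ≤ ENNReal.ofReal (a k) := by
    intro k
    set Bk : ℝ := C₁/V' * (Real.exp (5*t/2) * Real.exp (-(k:ℝ)^2/10)) with hBk_def
    have hpointwise : ∀ y ∈ A k,
        ENNReal.ofReal (Real.exp (dist x y) * ρ y) ≤ ENNReal.ofReal Bk := by
      intro y hy
      apply ENNReal.ofReal_le_ofReal
      set d := dist x y with hd_def
      have hd0 : 0 ≤ d := dist_nonneg
      have hd1 : (k:ℝ)*st ≤ d := hy.1
      have hk2 : (k:ℝ)^2 * t ≤ d^2 := by
        have h := pow_le_pow_left₀ (by positivity) hd1 2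
        calc (k:ℝ)^2 * t = ((k:ℝ)*st)^2 := by rw [mul_pow, hst2]
          _ ≤ d^2 := h
      have hexp : d + (-d^2/(5*t)) ≤ 5*t/2 + (-(k:ℝ)^2/10) := by
        have step1 : d - 5*t/2 ≤ d^2/(10*t) := by
          rw [le_div_iff₀ (by positivity)]
          nlinarith [sq_nonneg (d - 5*t)]
        have step2 : (k:ℝ)^2/10 ≤ d^2/(10*t) := by
          rw [div_le_div_iff₀ (by norm_num) (by positivity)]
          nlinarith
        have hsplit : -d^2/(5*t) = -(d^2/(10*t)) - d^2/(10*t) := by ring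
        linarith
      calc Real.exp d * ρ y
          ≤ Real.exp d * (C₁/V' * Real.exp (-d^2/(5*t))) :=
            mul_le_mul_of_nonneg_left (hρbnd y) (Real.exp_pos _).le
        _ = C₁/V' * Real.exp (d + (-d^2/(5*t))) := by rw [Real.exp_add]; ring
        _ ≤ Bk := by
            rw [hBk_def, ← Real.exp_add]
            exact mul_le_mul_of_nonneg_left (Real.exp_le_exp.mpr hexp) (by positivity)
    have hsub : A k ⊆ Metric.ball x (((k:ℝ)+1)*st) := by
      intro y hy
      rw [Metric.mem_ball, dist_comm]
      exact hy.2
    have hBG : m (Metric.ball x (((k:ℝ)+1)*st)) ≤ ENNReal.ofReal (((k:ℝ)+1)^N) * V := by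
      have h := aux_BG m x s N hN hs0 hpos hvol hanti hst
        (le_mul_of_one_le_left hst.le (by linarith [Nat.cast_nonneg (α := ℝ) k] : (1:ℝ) ≤ (k:ℝ)+1))
      have hq : (((k:ℝ)+1)*st)/st = (k:ℝ)+1 := by field_simp
      rwa [hq] at h
    have hBknn : 0 ≤ Bk := by positivity
    have hrpownn : (0:ℝ) ≤ ((k:ℝ)+1)^N := (Real.rpow_pos_of_pos (by positivity) _).le
    calc (∫⁻ y in A k, ENNReal.ofReal (Real.exp (dist x y) * ρ y) ∂m)
        ≤ ∫⁻ _ in A k, ENNReal.ofReal Bk ∂m := setLIntegral_mono' (hAmeas k) hpointwise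
      _ = ENNReal.ofReal Bk * m (A k) := setLIntegral_const _ _
      _ ≤ ENNReal.ofReal Bk * (ENNReal.ofReal (((k:ℝ)+1)^N) * V) :=
          mul_le_mul_right ((measure_mono hsub).trans hBG) _
      _ = ENNReal.ofReal (a k) := by
          rw [← ENNReal.ofReal_toReal hVtop, ← hV'_def,
            ← ENNReal.ofReal_mul hrpownn, ← ENNReal.ofReal_mul hBknn]
          congr 1
          rw [hBk_def, ha_def]
          field_simp
  calc (∫⁻ y, ENNReal.ofReal (Real.exp (dist x y) * ρ y) ∂m)
      = ∫⁻ y in ⋃ k, A k, ENNReal.ofReal (Real.exp (dist x y) * ρ y) ∂m := by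
        rw [hAunion, Measure.restrict_univ]
    _ = ∑' k : ℕ, ∫⁻ y in A k, ENNReal.ofReal (Real.exp (dist x y) * ρ y) ∂m :=
        lintegral_iUnion hAmeas hAdisj _
    _ ≤ ∑' k : ℕ, ENNReal.ofReal (a k) := ENNReal.tsum_le_tsum hbound
    _ = ENNReal.ofReal (∑' k : ℕ, a k) := by
        rw [ENNReal.ofReal_tsum_of_nonneg (fun k => by
          have := hterm_nonneg k; positivity) (hSsum.mul_left _)]
    _ = ENNReal.ofReal (C₁ * Real.exp (5*t/2) * S) := by
        rw [ha_def, tsum_mul_left, hS]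
end

section
/- Let X be a Polish space and let x↦μ_x be a Borel measurable assignment of Borel probability measures on X, i.e. x↦μ_x(E) is Borel measurable for every Borel set E⊆X (a Markov kernel from X to X). Then there exists a Borel measurable map T:X→X such that T(x)∈supp(μ_x) for every x∈X. -/
open MeasureTheory

section SelAux

open Metric

variable {X : Type*} [MetricSpace X] [MeasurableSpace X]
  (μ : X → Measure X) (d : ℕ → X)
  (key : ∀ (x : X) (k : ℕ) (c : ℕ), 0 < μ x (ball (d c) ((1/2 : ℝ)^k)) →
      ∃ n, 0 < μ x (ball (d n) ((1/2 : ℝ)^(k+1)) ∩ ball (d c) ((1/2 : ℝ)^k)))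
  (base : ∀ x : X, ∃ n, 0 < μ x (ball (d n) ((1/2 : ℝ)^0)))

/-- Auxiliary recursive selection of indices of dense points whose shrinking balls
have positive measure. -/
noncomputable def selIdx : (k : ℕ) → (x : X) →
    {n : ℕ // 0 < μ x (ball (d n) ((1/2 : ℝ)^k))}
  | 0, x => ⟨Nat.find (base x), Nat.find_spec (base x)⟩
  | (k+1), x =>
    ⟨Nat.find (key x k (selIdx k x).1 (selIdx k x).2),
      (Nat.find_spec (key x k (selIdx k x).1 (selIdx k x).2)).trans_le
        (measure_mono Set.inter_subset_left)⟩

lemma selIdx_succ (k : ℕ) (x : X) :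
    ((selIdx μ d key base (k+1) x : ℕ)) =
      Nat.find (key x k (selIdx μ d key base k x).1 (selIdx μ d key base k x).2) := rfl

lemma selIdx_succ_spec (k : ℕ) (x : X) :
    0 < μ x (ball (d (selIdx μ d key base (k+1) x)) ((1/2 : ℝ)^(k+1)) ∩
      ball (d (selIdx μ d key base k x)) ((1/2 : ℝ)^k)) :=
  Nat.find_spec (key x k (selIdx μ d key base k x).1 (selIdx μ d key base k x).2)

lemma selIdx_dist (k : ℕ) (x : X) :
    dist (d (selIdx μ d key base k x)) (d (selIdx μ d key base (k+1) x)) ≤ 2 * (1/2 : ℝ)^k := by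
  have h := selIdx_succ_spec μ d key base k x
  obtain ⟨y, hy1, hy2⟩ := nonempty_of_measure_ne_zero h.ne'
  rw [mem_ball] at hy1 hy2
  have h1 : dist (d (selIdx μ d key base k x)) (d (selIdx μ d key base (k+1) x)) ≤
      dist y (d (selIdx μ d key base k x)) + dist y (d (selIdx μ d key base (k+1) x)) := by
    rw [dist_comm y]
    exact dist_triangle _ _ _
  have : (1/2 : ℝ)^(k+1) ≤ (1/2 : ℝ)^k := by
    apply pow_le_pow_of_le_one <;> norm_num
  nlinarith [hy1, hy2]

lemma measurable_selIdx (hmeas : ∀ E : Set X, MeasurableSet E → Measurable fun x => μ x E)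
    [OpensMeasurableSpace X] (k : ℕ) :
    Measurable fun x => ((selIdx μ d key base k x : ℕ)) := by
  have hm : ∀ s : Set X, MeasurableSet s → MeasurableSet {x | 0 < μ x s} := fun s hs =>
    hmeas s hs measurableSet_Ioi
  induction k with
  | zero =>
    apply measurable_to_countable'
    intro n
    have : (fun x => ((selIdx μ d key base 0 x : ℕ))) ⁻¹' {n} =
        {x | 0 < μ x (ball (d n) ((1/2 : ℝ)^0))} ∩
          ⋂ m, ⋂ _ : m < n, {x | ¬ 0 < μ x (ball (d m) ((1/2 : ℝ)^0))} := by
      ext x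
      simp [selIdx, Nat.find_eq_iff]
    rw [this]
    exact ((hm _ measurableSet_ball).inter
      (MeasurableSet.iInter fun m => MeasurableSet.iInter fun _ =>
        (hm _ measurableSet_ball).compl))
  | succ k ih =>
    apply measurable_to_countable'
    intro n
    have : (fun x => ((selIdx μ d key base (k+1) x : ℕ))) ⁻¹' {n} =
        ⋃ m, ((fun x => ((selIdx μ d key base k x : ℕ))) ⁻¹' {m} ∩
          ({x | 0 < μ x (ball (d n) ((1/2 : ℝ)^(k+1)) ∩ ball (d m) ((1/2 : ℝ)^k))} ∩
            ⋂ j, ⋂ _ : j < n,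
              {x | ¬ 0 < μ x (ball (d j) ((1/2 : ℝ)^(k+1)) ∩ ball (d m) ((1/2 : ℝ)^k))})) := by
      ext x
      simp only [Set.mem_preimage, Set.mem_singleton_iff, Set.mem_iUnion, Set.mem_inter_iff,
        Set.mem_setOf_eq, Set.mem_iInter, selIdx_succ, Nat.find_eq_iff]
      constructor
      · rintro ⟨h1, h2⟩
        exact ⟨(selIdx μ d key base k x : ℕ), rfl, h1, fun j hj => h2 j hj⟩
      · rintro ⟨m, hm', h1, h2⟩
        subst hm'
        exact ⟨h1, h2⟩
    rw [this]
    refine MeasurableSet.iUnion fun m => (ih (measurableSet_singleton m)).inter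
      ((hm _ (measurableSet_ball.inter measurableSet_ball)).inter
        (MeasurableSet.iInter fun j => MeasurableSet.iInter fun _ =>
          (hm _ (measurableSet_ball.inter measurableSet_ball)).compl))

end SelAux

/-- Borel selection (variant of Kuratowski–Ryll-Nardzewski): given a Borel measurable
assignment `x ↦ μ x` of Borel measurable probability measures on a Polish space `X` (a Markov
kernel), there is a Borel map `T : X → X` with `T x ∈ supp (μ x)` for every `x`,
where `y ∈ supp μ` means every open set containing `y` has positive `μ`-measure. -/
theorem borel_selection_in_support
    {X : Type*} [TopologicalSpace X] [PolishSpace X]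
    [MeasurableSpace X] [BorelSpace X]
    (μ : X → Measure X)
    (hprob : ∀ x : X, IsProbabilityMeasure (μ x))
    (hmeas : ∀ E : Set X, MeasurableSet E → Measurable fun x => μ x E) :
    ∃ T : X → X, Measurable T ∧
      ∀ x : X, ∀ U : Set X, IsOpen U → T x ∈ U → 0 < μ x U := by
  classical
  rcases isEmpty_or_nonempty X with hX | hX
  · exact ⟨id, measurable_id, fun x => (IsEmpty.false x).elim⟩
  letI := TopologicalSpace.upgradeIsCompletelyMetrizable X
  set d : ℕ → X := TopologicalSpace.denseSeq X with hd_def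
  have hd : DenseRange d := TopologicalSpace.denseRange_denseSeq X
  -- key covering lemma
  have cover : ∀ (x : X) (s : Set X) (t : ℝ), 0 < t → 0 < μ x s →
      ∃ n, 0 < μ x (Metric.ball (d n) t ∩ s) := by
    intro x s t ht hs
    by_contra hcon
    push_neg at hcon
    have hz : ∀ n, μ x (Metric.ball (d n) t ∩ s) = 0 := fun n =>
      le_antisymm (hcon n) (zero_le)
    have hsub : s ⊆ ⋃ n, (Metric.ball (d n) t ∩ s) := by
      intro y hy
      obtain ⟨n, hn⟩ := Metric.denseRange_iff.1 hd y t ht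
      exact Set.mem_iUnion.2 ⟨n, Metric.mem_ball.2 hn, hy⟩
    have : μ x s ≤ 0 := by
      calc μ x s ≤ μ x (⋃ n, (Metric.ball (d n) t ∩ s)) := measure_mono hsub
        _ = 0 := measure_iUnion_null hz
    exact hs.ne' (le_antisymm this (zero_le))
  have key : ∀ (x : X) (k : ℕ) (c : ℕ),
      0 < μ x (Metric.ball (d c) ((1/2 : ℝ)^k)) →
      ∃ n, 0 < μ x (Metric.ball (d n) ((1/2 : ℝ)^(k+1)) ∩ Metric.ball (d c) ((1/2 : ℝ)^k)) :=
    fun x k c hc => cover x _ _ (by positivity) hc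
  have base : ∀ x : X, ∃ n, 0 < μ x (Metric.ball (d n) ((1/2 : ℝ)^0)) := by
    intro x
    have huniv : 0 < μ x Set.univ := by
      have := (hprob x).measure_univ
      rw [this]; norm_num
    obtain ⟨n, hn⟩ := cover x Set.univ ((1/2 : ℝ)^0) (by norm_num) huniv
    exact ⟨n, hn.trans_le (measure_mono Set.inter_subset_left)⟩
  -- the approximating sequence
  set f : ℕ → X → X := fun k x => d (selIdx μ d key base k x) with hf_def
  have hdist : ∀ (x : X) (k : ℕ), dist (f k x) (f (k+1) x) ≤ 2 * (1/2 : ℝ)^k :=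
    fun x k => selIdx_dist μ d key base k x
  have hcauchy : ∀ x : X, CauchySeq (fun k => f k x) := fun x =>
    cauchySeq_of_le_geometric (1/2) 2 (by norm_num) (hdist x)
  choose T hT using fun x => cauchySeq_tendsto_of_complete (hcauchy x)
  have hTdist : ∀ (x : X) (k : ℕ), dist (f k x) (T x) ≤ 2 * (1/2 : ℝ)^k / (1 - 1/2) :=
    fun x k => dist_le_of_le_geometric_of_tendsto (1/2) 2 (by norm_num) (hdist x) (hT x) k
  refine ⟨T, ?_, ?_⟩
  · -- measurability
    have hfk : ∀ k, Measurable (f k) := fun k =>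
      (measurable_of_countable d).comp (measurable_selIdx μ d key base hmeas k)
    refine measurable_of_tendsto_metrizable' Filter.atTop hfk ?_
    rw [tendsto_pi_nhds]
    exact hT
  · intro x U hU hxU
    obtain ⟨ε, hε, hball⟩ := Metric.isOpen_iff.1 hU (T x) hxU
    obtain ⟨k, hk⟩ : ∃ k : ℕ, (5 : ℝ) * (1/2)^k < ε := by
      obtain ⟨k, hk⟩ := exists_pow_lt_of_lt_one (show (0 : ℝ) < ε / 5 by linarith)
        (show (1/2 : ℝ) < 1 by norm_num)
      exact ⟨k, by linarith⟩
    have hsub : Metric.ball (f k x) ((1/2 : ℝ)^k) ⊆ U := by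
      intro y hy
      apply hball
      rw [Metric.mem_ball] at hy ⊢
      have h1 := hTdist x k
      have h2 : dist y (T x) ≤ dist y (f k x) + dist (f k x) (T x) := dist_triangle _ _ _
      have : 2 * (1/2 : ℝ)^k / (1 - 1/2) = 4 * (1/2)^k := by ring
      rw [this] at h1
      linarith
    exact ((selIdx μ d key base k x).2).trans_le (measure_mono hsub)
end

section
/- Let (X',d') be a geodesic metric space containing at least two points, and endow the product X'×ℝ with the distance ((x',t),(y',s)) ↦ √(d'(x',y')² + |t−s|²). Then the Hausdorff dimension of X'×ℝ is at least 2. -/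
open MeasureTheory
open scoped NNReal ENNReal

section Aux

instance : FiniteDimensional ℝ (WithLp 2 (ℝ × ℝ)) :=
  Module.Finite.equiv (WithLp.linearEquiv 2 ℝ (ℝ × ℝ)).symm

lemma finrank_withLp_two : Module.finrank ℝ (WithLp 2 (ℝ × ℝ)) = 2 := by
  rw [(WithLp.linearEquiv 2 ℝ (ℝ × ℝ)).finrank_eq]
  simp [Module.finrank_prod]

lemma prod_dist_eq_of_L2' {α β : Type*} [PseudoMetricSpace α] [PseudoMetricSpace β]
    (x y : WithLp 2 (α × β)) :
    dist x y = Real.sqrt (dist x.fst y.fst ^ 2 + dist x.snd y.snd ^ 2) := by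
  have h : (0:ℝ) < (2:ℝ≥0∞).toReal := by norm_num
  rw [WithLp.prod_dist_eq_add h, Real.sqrt_eq_rpow]
  norm_num

end Aux

/-- If `(X', d')` is a geodesic metric space with at least two points, then the product
`X' × ℝ`, endowed with the distance
`((x',t),(y',s)) ↦ √(d'(x',y')² + |t−s|²)` (the `ℓ²`-product metric, i.e. `WithLp 2`),
has Hausdorff dimension at least `2`. -/
theorem product_with_line_dimH_ge_two
    {X' : Type*} [MetricSpace X']
    (hgeo : ∀ x y : X', ∃ γ : ℝ → X', γ 0 = x ∧ γ 1 = y ∧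
      ∀ s ∈ Set.Icc (0:ℝ) 1, ∀ t ∈ Set.Icc (0:ℝ) 1,
        dist (γ s) (γ t) = |s - t| * dist x y)
    (hpts : ∃ a b : X', a ≠ b) :
    2 ≤ dimH (Set.univ : Set (WithLp 2 (X' × ℝ))) := by
  obtain ⟨a, b, hab⟩ := hpts
  obtain ⟨γ, hγ0, hγ1, hγ⟩ := hgeo a b
  set c : ℝ := dist a b with hc
  have hc0 : 0 < c := dist_pos.2 hab
  -- the Lipschitz map g : X' × ℝ → ℝ × ℝ, (x, t) ↦ (dist a x / c, t)
  set g : WithLp 2 (X' × ℝ) → WithLp 2 (ℝ × ℝ) := fun u =>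
    (WithLp.equiv 2 (ℝ × ℝ)).symm (dist a u.fst / c, u.snd) with hg
  set K : ℝ≥0 := max ⟨c, hc0.le⟩⁻¹ 1 with hK
  have hK1 : (1:ℝ) ≤ K := by exact_mod_cast le_max_right (⟨c, hc0.le⟩ : ℝ≥0)⁻¹ 1
  have hKc : (1:ℝ) ≤ (K:ℝ) * c := by
    have h0 : ((⟨c, hc0.le⟩ : ℝ≥0)⁻¹ : ℝ≥0) ≤ K := le_max_left _ _
    have h' : ((⟨c, hc0.le⟩ : ℝ≥0)⁻¹ : ℝ) * c ≤ (K : ℝ) * c :=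
      mul_le_mul_of_nonneg_right (by exact_mod_cast h0) hc0.le
    calc (1:ℝ) = c⁻¹ * c := (inv_mul_cancel₀ hc0.ne').symm
      _ ≤ (K : ℝ) * c := by simpa using h'
  have hKnn : (0:ℝ) ≤ K := K.coe_nonneg
  have hglip : LipschitzWith K g := by
    apply LipschitzWith.of_dist_le_mul
    intro u v
    rw [prod_dist_eq_of_L2' (g u) (g v), prod_dist_eq_of_L2' u v]
    have h1 : dist (g u).fst (g v).fst ≤ (K : ℝ) * dist u.fst v.fst := by
      simp only [hg, WithLp.equiv_symm_apply, WithLp.toLp_fst]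
      rw [Real.dist_eq, div_sub_div_same, abs_div, abs_of_pos hc0, div_le_iff₀ hc0]
      calc |dist a u.fst - dist a v.fst| ≤ dist u.fst v.fst := by
            rw [dist_comm a u.fst, dist_comm a v.fst]
            exact abs_dist_sub_le _ _ _
        _ ≤ (K : ℝ) * dist u.fst v.fst * c := by
            nlinarith [dist_nonneg (x := u.fst) (y := v.fst)]
    have h2 : dist (g u).snd (g v).snd ≤ (K : ℝ) * dist u.snd v.snd := by
      simp only [hg, WithLp.equiv_symm_apply, WithLp.toLp_snd]
      nlinarith [dist_nonneg (x := u.snd) (y := v.snd)]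
    calc Real.sqrt (dist (g u).fst (g v).fst ^ 2 + dist (g u).snd (g v).snd ^ 2)
        ≤ Real.sqrt ((K * dist u.fst v.fst) ^ 2 + (K * dist u.snd v.snd) ^ 2) := by
          apply Real.sqrt_le_sqrt
          have := dist_nonneg (x := (g u).fst) (y := (g v).fst)
          have := dist_nonneg (x := (g u).snd) (y := (g v).snd)
          nlinarith
      _ = (K : ℝ) * Real.sqrt (dist u.fst v.fst ^ 2 + dist u.snd v.snd ^ 2) := by
          rw [mul_pow, mul_pow, ← mul_add, Real.sqrt_mul (by positivity), Real.sqrt_sq hKnn]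
  -- the square-ish set S = Icc 0 1 × univ is contained in the image of g
  set S : Set (WithLp 2 (ℝ × ℝ)) :=
    (WithLp.equiv 2 (ℝ × ℝ)).symm '' (Set.Ioo (0:ℝ) 1 ×ˢ (Set.univ : Set ℝ)) with hS
  have hSsub : S ⊆ g '' Set.univ := by
    rintro p ⟨⟨s, t⟩, ⟨hs, -⟩, rfl⟩
    refine ⟨(WithLp.equiv 2 (X' × ℝ)).symm (γ s, t), trivial, ?_⟩
    have hdist : dist a (γ s) = s * c := by
      have h := hγ 0 ⟨le_refl 0, zero_le_one⟩ s ⟨hs.1.le, hs.2.le⟩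
      rw [hγ0] at h
      rw [h, zero_sub, abs_neg, abs_of_nonneg hs.1.le]
    simp only [hg]
    congr 1
    rw [show ((WithLp.equiv 2 (X' × ℝ)).symm (γ s, t)).fst = γ s from rfl,
      show ((WithLp.equiv 2 (X' × ℝ)).symm (γ s, t)).snd = t from rfl, hdist]
    field_simp
  -- S has Hausdorff dimension 2
  have hSdim : dimH S = 2 := by
    have hopen : IsOpen S := by
      have : S = (WithLp.equiv 2 (ℝ × ℝ)) ⁻¹' (Set.Ioo (0:ℝ) 1 ×ˢ (Set.univ : Set ℝ)) := by
        rw [hS]; ext p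
        rw [Equiv.image_eq_preimage_symm, Equiv.symm_symm]
      rw [this]
      exact (isOpen_Ioo.prod isOpen_univ).preimage (WithLp.prodContinuousLinearEquiv 2 ℝ ℝ ℝ).continuous
    have hmem : S ∈ nhds ((WithLp.equiv 2 (ℝ × ℝ)).symm ((1:ℝ)/2, 0)) := by
      apply hopen.mem_nhds
      exact ⟨((1:ℝ)/2, 0), ⟨⟨by norm_num, by norm_num⟩, trivial⟩, rfl⟩
    rw [Real.dimH_of_mem_nhds hmem, finrank_withLp_two]
    norm_num
  calc (2 : ℝ≥0∞) = dimH S := hSdim.symm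
    _ ≤ dimH (g '' Set.univ) := dimH_mono hSsub
    _ ≤ dimH (Set.univ : Set (WithLp 2 (X' × ℝ))) := hglip.dimH_image_le _
end
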